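/- arXiv:2506.21084 — 3 statements merged into one kernel-verified Lean document; each statement's English description precedes it below -/
import Mathlib

section
/- The neighborhood N = {(0,1), (−1,0), (1,1), (1,−1), (−1,−1)} (neighborhood 151 in the 8-bit numbering of subsets of the Moore neighborhood) admits a timed crossover gate of size 10 × 10 and delay 13. -/
/-! Sandpile models on ℤ² and timed crossover gates. -/

abbrev Cell : Type := ℤ × ℤ
abbrev Config : Type := Cell → ℕ

namespace Sandpile

/-- The threshold of a sandpile model is the cardinality of its neighborhood. -/
def θ (𝒩 : Finset Cell) : ℕ := 𝒩.card

/-- The parallel sandpile dynamics: each cell reaching the threshold topples,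
sending one grain to each of its out-neighbors. -/
def F (𝒩 : Finset Cell) (c : Config) : Config := fun p =>
  c p - θ 𝒩 * (if θ 𝒩 ≤ c p then 1 else 0)
    + ∑ p' ∈ 𝒩, (if θ 𝒩 ≤ c (p - p') then 1 else 0)

/-- The configuration with a single grain at cell `p`. -/
def one (p : Cell) : Config := fun q => if q = p then 1 else 0

/-- A configuration is stable when every cell is below the threshold. -/
def Stable (𝒩 : Finset Cell) (c : Config) : Prop := ∀ p, c p < θ 𝒩

/-- The rectangle {0,…,M−1} × {0,…,N'−1}. -/
def Rect (M N' : ℕ) : Set Cell :=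
  {p | 0 ≤ p.1 ∧ p.1 < (M : ℤ) ∧ 0 ≤ p.2 ∧ p.2 < (N' : ℤ)}

/-- The four corners of the rectangle. -/
def Corners (M N' : ℕ) : Set Cell :=
  {(0, 0), ((M : ℤ) - 1, 0), (0, (N' : ℤ) - 1), ((M : ℤ) - 1, (N' : ℤ) - 1)}

/-- The four sides of the rectangle. -/
def side (M N' : ℕ) (i : Fin 4) : Set Cell :=
  if i = 0 then {p | p.1 = 0 ∧ 0 ≤ p.2 ∧ p.2 < (N' : ℤ)}
  else if i = 1 then {p | p.2 = 0 ∧ 0 ≤ p.1 ∧ p.1 < (M : ℤ)}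
  else if i = 2 then {p | p.1 = (M : ℤ) - 1 ∧ 0 ≤ p.2 ∧ p.2 < (N' : ℤ)}
  else {p | p.2 = (N' : ℤ) - 1 ∧ 0 ≤ p.1 ∧ p.1 < (M : ℤ)}

/-- A timed crossover gate of size M × N' and delay T for the sandpile model 𝒩:
a stable configuration `g` supported on the rectangle, together with four
non-corner cells `n`, `e`, `s`, `w` on four pairwise different sides, `n, s`
(resp. `w, e`) on opposite sides, such that adding a grain at `n` (resp. `w`)
makes `s` (resp. `e`) reach the threshold at time exactly `T`, while no cell
on the two other sides reaches the threshold at any time `t ≤ T`. -/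
def IsTimedCrossoverGate (𝒩 : Finset Cell) (M N' T : ℕ)
    (g : Config) (n e s w : Cell) : Prop :=
  Stable 𝒩 g ∧
  (∀ p, p ∉ Rect M N' → g p = 0) ∧
  n ∈ Rect M N' ∧ e ∈ Rect M N' ∧ s ∈ Rect M N' ∧ w ∈ Rect M N' ∧
  n ∉ Corners M N' ∧ e ∉ Corners M N' ∧ s ∉ Corners M N' ∧ w ∉ Corners M N' ∧
  ∃ iN iE iS iW : Fin 4,
    n ∈ side M N' iN ∧ e ∈ side M N' iE ∧ s ∈ side M N' iS ∧ w ∈ side M N' iW ∧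
    ((iN : ℤ) - (iS : ℤ)).natAbs = 2 ∧
    ((iW : ℤ) - (iE : ℤ)).natAbs = 2 ∧
    ({iN, iE, iS, iW} : Finset (Fin 4)) = Finset.univ ∧
    θ 𝒩 ≤ (F 𝒩)^[T] (g + one n) s ∧
    (∀ p ∈ side M N' iW ∪ side M N' iE, ∀ t ≤ T, (F 𝒩)^[t] (g + one n) p < θ 𝒩) ∧
    θ 𝒩 ≤ (F 𝒩)^[T] (g + one w) e ∧
    (∀ p ∈ side M N' iN ∪ side M N' iS, ∀ t ≤ T, (F 𝒩)^[t] (g + one w) p < θ 𝒩)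

set_option maxRecDepth 40000

abbrev Grid : Type := List (List ℕ)

/-- Entry of a 14×14 grid, 0 outside. -/
def ent (d : Grid) (x y : ℤ) : ℕ :=
  if 0 ≤ x ∧ x < 14 ∧ 0 ≤ y ∧ y < 14 then (d.getD x.toNat []).getD y.toNat 0 else 0

/-- Configuration read off from the `t`-th grid of a list, with offset 2. -/
def look (ds : List Grid) (t : ℕ) : Config := fun p => ent (ds.getD t []) (p.1 + 2) (p.2 + 2)

def N5 : Finset Cell := {(0,1),(-1,0),(1,1),(1,-1),(-1,-1)}

def dG : Grid :=
[[0,0,0,0,0,0,0,0,0,0,0,0,0,0],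
 [0,0,0,0,0,0,0,0,0,0,0,0,0,0],
 [0,0,0,0,0,0,0,0,4,0,0,0,0,0],
 [0,0,0,3,0,4,4,4,3,3,0,0,0,0],
 [0,0,0,3,0,3,4,3,4,4,1,0,0,0],
 [0,0,0,0,2,2,3,3,3,0,0,0,0,0],
 [0,0,4,4,3,1,0,4,3,0,4,4,0,0],
 [0,0,0,1,4,4,4,1,1,4,3,0,0,0],
 [0,0,0,1,1,4,2,4,3,3,3,0,0,0],
 [0,0,0,4,4,2,0,3,4,4,1,0,0,0],
 [0,0,0,0,4,4,3,3,0,0,4,0,0,0],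
 [0,0,0,0,0,4,0,0,0,0,0,0,0,0],
 [0,0,0,0,0,0,0,0,0,0,0,0,0,0],
 [0,0,0,0,0,0,0,0,0,0,0,0,0,0]]

def dA : List Grid := [
[[0,0,0,0,0,0,0,0,0,0,0,0,0,0],
 [0,0,0,0,0,0,0,0,0,0,0,0,0,0],
 [0,0,0,0,0,0,0,0,4,0,0,0,0,0],
 [0,0,0,3,0,4,4,4,3,3,0,0,0,0],
 [0,0,0,3,0,3,4,3,4,4,1,0,0,0],
 [0,0,0,0,2,2,3,3,3,0,0,0,0,0],
 [0,0,5,4,3,1,0,4,3,0,4,4,0,0],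
 [0,0,0,1,4,4,4,1,1,4,3,0,0,0],
 [0,0,0,1,1,4,2,4,3,3,3,0,0,0],
 [0,0,0,4,4,2,0,3,4,4,1,0,0,0],
 [0,0,0,0,4,4,3,3,0,0,4,0,0,0],
 [0,0,0,0,0,4,0,0,0,0,0,0,0,0],
 [0,0,0,0,0,0,0,0,0,0,0,0,0,0],
 [0,0,0,0,0,0,0,0,0,0,0,0,0,0]],
[[0,0,0,0,0,0,0,0,0,0,0,0,0,0],
 [0,0,0,0,0,0,0,0,0,0,0,0,0,0],
 [0,0,0,0,0,0,0,0,4,0,0,0,0,0],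
 [0,0,0,3,0,4,4,4,3,3,0,0,0,0],
 [0,0,0,3,0,3,4,3,4,4,1,0,0,0],
 [0,1,1,0,2,2,3,3,3,0,0,0,0,0],
 [0,0,0,5,3,1,0,4,3,0,4,4,0,0],
 [0,1,0,2,4,4,4,1,1,4,3,0,0,0],
 [0,0,0,1,1,4,2,4,3,3,3,0,0,0],
 [0,0,0,4,4,2,0,3,4,4,1,0,0,0],
 [0,0,0,0,4,4,3,3,0,0,4,0,0,0],
 [0,0,0,0,0,4,0,0,0,0,0,0,0,0],
 [0,0,0,0,0,0,0,0,0,0,0,0,0,0],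
 [0,0,0,0,0,0,0,0,0,0,0,0,0,0]],
[[0,0,0,0,0,0,0,0,0,0,0,0,0,0],
 [0,0,0,0,0,0,0,0,0,0,0,0,0,0],
 [0,0,0,0,0,0,0,0,4,0,0,0,0,0],
 [0,0,0,3,0,4,4,4,3,3,0,0,0,0],
 [0,0,0,3,0,3,4,3,4,4,1,0,0,0],
 [0,1,2,1,2,2,3,3,3,0,0,0,0,0],
 [0,0,0,0,4,1,0,4,3,0,4,4,0,0],
 [0,1,1,2,5,4,4,1,1,4,3,0,0,0],
 [0,0,0,1,1,4,2,4,3,3,3,0,0,0],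
 [0,0,0,4,4,2,0,3,4,4,1,0,0,0],
 [0,0,0,0,4,4,3,3,0,0,4,0,0,0],
 [0,0,0,0,0,4,0,0,0,0,0,0,0,0],
 [0,0,0,0,0,0,0,0,0,0,0,0,0,0],
 [0,0,0,0,0,0,0,0,0,0,0,0,0,0]],
[[0,0,0,0,0,0,0,0,0,0,0,0,0,0],
 [0,0,0,0,0,0,0,0,0,0,0,0,0,0],
 [0,0,0,0,0,0,0,0,4,0,0,0,0,0],
 [0,0,0,3,0,4,4,4,3,3,0,0,0,0],
 [0,0,0,3,0,3,4,3,4,4,1,0,0,0],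
 [0,1,2,1,2,2,3,3,3,0,0,0,0,0],
 [0,0,0,1,5,1,0,4,3,0,4,4,0,0],
 [0,1,1,2,0,5,4,1,1,4,3,0,0,0],
 [0,0,0,2,1,5,2,4,3,3,3,0,0,0],
 [0,0,0,4,4,2,0,3,4,4,1,0,0,0],
 [0,0,0,0,4,4,3,3,0,0,4,0,0,0],
 [0,0,0,0,0,4,0,0,0,0,0,0,0,0],
 [0,0,0,0,0,0,0,0,0,0,0,0,0,0],
 [0,0,0,0,0,0,0,0,0,0,0,0,0,0]],
[[0,0,0,0,0,0,0,0,0,0,0,0,0,0],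
 [0,0,0,0,0,0,0,0,0,0,0,0,0,0],
 [0,0,0,0,0,0,0,0,4,0,0,0,0,0],
 [0,0,0,3,0,4,4,4,3,3,0,0,0,0],
 [0,0,0,3,0,3,4,3,4,4,1,0,0,0],
 [0,1,2,2,3,2,3,3,3,0,0,0,0,0],
 [0,0,0,1,1,3,0,4,3,0,4,4,0,0],
 [0,1,1,3,1,2,5,1,1,4,3,0,0,0],
 [0,0,0,2,2,0,4,4,3,3,3,0,0,0],
 [0,0,0,4,5,2,1,3,4,4,1,0,0,0],
 [0,0,0,0,4,4,3,3,0,0,4,0,0,0],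
 [0,0,0,0,0,4,0,0,0,0,0,0,0,0],
 [0,0,0,0,0,0,0,0,0,0,0,0,0,0],
 [0,0,0,0,0,0,0,0,0,0,0,0,0,0]],
[[0,0,0,0,0,0,0,0,0,0,0,0,0,0],
 [0,0,0,0,0,0,0,0,0,0,0,0,0,0],
 [0,0,0,0,0,0,0,0,4,0,0,0,0,0],
 [0,0,0,3,0,4,4,4,3,3,0,0,0,0],
 [0,0,0,3,0,3,4,3,4,4,1,0,0,0],
 [0,1,2,2,3,2,3,3,3,0,0,0,0,0],
 [0,0,0,1,1,4,1,4,3,0,4,4,0,0],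
 [0,1,1,3,1,2,0,2,1,4,3,0,0,0],
 [0,0,0,3,3,1,4,5,3,3,3,0,0,0],
 [0,0,0,4,0,3,1,3,4,4,1,0,0,0],
 [0,0,0,1,4,5,3,3,0,0,4,0,0,0],
 [0,0,0,0,0,4,0,0,0,0,0,0,0,0],
 [0,0,0,0,0,0,0,0,0,0,0,0,0,0],
 [0,0,0,0,0,0,0,0,0,0,0,0,0,0]],
[[0,0,0,0,0,0,0,0,0,0,0,0,0,0],
 [0,0,0,0,0,0,0,0,0,0,0,0,0,0],
 [0,0,0,0,0,0,0,0,4,0,0,0,0,0],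
 [0,0,0,3,0,4,4,4,3,3,0,0,0,0],
 [0,0,0,3,0,3,4,3,4,4,1,0,0,0],
 [0,1,2,2,3,2,3,3,3,0,0,0,0,0],
 [0,0,0,1,1,4,1,4,3,0,4,4,0,0],
 [0,1,1,3,1,2,1,3,1,4,3,0,0,0],
 [0,0,0,3,3,1,4,0,4,3,3,0,0,0],
 [0,0,0,4,1,4,2,3,5,4,1,0,0,0],
 [0,0,0,1,4,0,4,3,0,0,4,0,0,0],
 [0,0,0,0,1,4,1,0,0,0,0,0,0,0],
 [0,0,0,0,0,0,0,0,0,0,0,0,0,0],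
 [0,0,0,0,0,0,0,0,0,0,0,0,0,0]],
[[0,0,0,0,0,0,0,0,0,0,0,0,0,0],
 [0,0,0,0,0,0,0,0,0,0,0,0,0,0],
 [0,0,0,0,0,0,0,0,4,0,0,0,0,0],
 [0,0,0,3,0,4,4,4,3,3,0,0,0,0],
 [0,0,0,3,0,3,4,3,4,4,1,0,0,0],
 [0,1,2,2,3,2,3,3,3,0,0,0,0,0],
 [0,0,0,1,1,4,1,4,3,0,4,4,0,0],
 [0,1,1,3,1,2,1,3,1,4,3,0,0,0],
 [0,0,0,3,3,1,4,1,5,3,3,0,0,0],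
 [0,0,0,4,1,4,2,3,0,5,1,0,0,0],
 [0,0,0,1,4,0,4,4,0,1,4,0,0,0],
 [0,0,0,0,1,4,1,0,0,0,0,0,0,0],
 [0,0,0,0,0,0,0,0,0,0,0,0,0,0],
 [0,0,0,0,0,0,0,0,0,0,0,0,0,0]],
[[0,0,0,0,0,0,0,0,0,0,0,0,0,0],
 [0,0,0,0,0,0,0,0,0,0,0,0,0,0],
 [0,0,0,0,0,0,0,0,4,0,0,0,0,0],
 [0,0,0,3,0,4,4,4,3,3,0,0,0,0],
 [0,0,0,3,0,3,4,3,4,4,1,0,0,0],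
 [0,1,2,2,3,2,3,3,3,0,0,0,0,0],
 [0,0,0,1,1,4,1,4,3,0,4,4,0,0],
 [0,1,1,3,1,2,1,4,2,4,3,0,0,0],
 [0,0,0,3,3,1,4,1,1,5,3,0,0,0],
 [0,0,0,4,1,4,2,4,0,1,2,0,0,0],
 [0,0,0,1,4,0,4,4,1,1,5,0,0,0],
 [0,0,0,0,1,4,1,0,0,0,0,0,0,0],
 [0,0,0,0,0,0,0,0,0,0,0,0,0,0],
 [0,0,0,0,0,0,0,0,0,0,0,0,0,0]],
[[0,0,0,0,0,0,0,0,0,0,0,0,0,0],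
 [0,0,0,0,0,0,0,0,0,0,0,0,0,0],
 [0,0,0,0,0,0,0,0,4,0,0,0,0,0],
 [0,0,0,3,0,4,4,4,3,3,0,0,0,0],
 [0,0,0,3,0,3,4,3,4,4,1,0,0,0],
 [0,1,2,2,3,2,3,3,3,0,0,0,0,0],
 [0,0,0,1,1,4,1,4,3,0,4,4,0,0],
 [0,1,1,3,1,2,1,4,3,5,3,0,0,0],
 [0,0,0,3,3,1,4,1,1,0,4,0,0,0],
 [0,0,0,4,1,4,2,4,1,2,4,0,0,0],
 [0,0,0,1,4,0,4,4,1,1,0,1,0,0],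
 [0,0,0,0,1,4,1,0,0,1,0,1,0,0],
 [0,0,0,0,0,0,0,0,0,0,0,0,0,0],
 [0,0,0,0,0,0,0,0,0,0,0,0,0,0]],
[[0,0,0,0,0,0,0,0,0,0,0,0,0,0],
 [0,0,0,0,0,0,0,0,0,0,0,0,0,0],
 [0,0,0,0,0,0,0,0,4,0,0,0,0,0],
 [0,0,0,3,0,4,4,4,3,3,0,0,0,0],
 [0,0,0,3,0,3,4,3,4,4,1,0,0,0],
 [0,1,2,2,3,2,3,3,3,0,0,0,0,0],
 [0,0,0,1,1,4,1,4,4,1,4,4,0,0],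
 [0,1,1,3,1,2,1,4,3,0,4,0,0,0],
 [0,0,0,3,3,1,4,1,2,0,5,0,0,0],
 [0,0,0,4,1,4,2,4,1,2,4,0,0,0],
 [0,0,0,1,4,0,4,4,1,1,0,1,0,0],
 [0,0,0,0,1,4,1,0,0,1,0,1,0,0],
 [0,0,0,0,0,0,0,0,0,0,0,0,0,0],
 [0,0,0,0,0,0,0,0,0,0,0,0,0,0]],
[[0,0,0,0,0,0,0,0,0,0,0,0,0,0],
 [0,0,0,0,0,0,0,0,0,0,0,0,0,0],
 [0,0,0,0,0,0,0,0,4,0,0,0,0,0],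
 [0,0,0,3,0,4,4,4,3,3,0,0,0,0],
 [0,0,0,3,0,3,4,3,4,4,1,0,0,0],
 [0,1,2,2,3,2,3,3,3,0,0,0,0,0],
 [0,0,0,1,1,4,1,4,4,1,4,4,0,0],
 [0,1,1,3,1,2,1,4,3,1,5,0,0,0],
 [0,0,0,3,3,1,4,1,2,0,0,1,0,0],
 [0,0,0,4,1,4,2,4,1,3,4,1,0,0],
 [0,0,0,1,4,0,4,4,1,1,0,1,0,0],
 [0,0,0,0,1,4,1,0,0,1,0,1,0,0],
 [0,0,0,0,0,0,0,0,0,0,0,0,0,0],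
 [0,0,0,0,0,0,0,0,0,0,0,0,0,0]],
[[0,0,0,0,0,0,0,0,0,0,0,0,0,0],
 [0,0,0,0,0,0,0,0,0,0,0,0,0,0],
 [0,0,0,0,0,0,0,0,4,0,0,0,0,0],
 [0,0,0,3,0,4,4,4,3,3,0,0,0,0],
 [0,0,0,3,0,3,4,3,4,4,1,0,0,0],
 [0,1,2,2,3,2,3,3,3,0,0,0,0,0],
 [0,0,0,1,1,4,1,4,4,2,5,4,0,0],
 [0,1,1,3,1,2,1,4,3,1,0,1,0,0],
 [0,0,0,3,3,1,4,1,2,1,0,2,0,0],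
 [0,0,0,4,1,4,2,4,1,3,4,1,0,0],
 [0,0,0,1,4,0,4,4,1,1,0,1,0,0],
 [0,0,0,0,1,4,1,0,0,1,0,1,0,0],
 [0,0,0,0,0,0,0,0,0,0,0,0,0,0],
 [0,0,0,0,0,0,0,0,0,0,0,0,0,0]],
[[0,0,0,0,0,0,0,0,0,0,0,0,0,0],
 [0,0,0,0,0,0,0,0,0,0,0,0,0,0],
 [0,0,0,0,0,0,0,0,4,0,0,0,0,0],
 [0,0,0,3,0,4,4,4,3,3,0,0,0,0],
 [0,0,0,3,0,3,4,3,4,4,1,0,0,0],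
 [0,1,2,2,3,2,3,3,3,1,1,0,0,0],
 [0,0,0,1,1,4,1,4,4,2,0,5,0,0],
 [0,1,1,3,1,2,1,4,3,2,0,2,0,0],
 [0,0,0,3,3,1,4,1,2,1,0,2,0,0],
 [0,0,0,4,1,4,2,4,1,3,4,1,0,0],
 [0,0,0,1,4,0,4,4,1,1,0,1,0,0],
 [0,0,0,0,1,4,1,0,0,1,0,1,0,0],
 [0,0,0,0,0,0,0,0,0,0,0,0,0,0],
 [0,0,0,0,0,0,0,0,0,0,0,0,0,0]]]

def dB : List Grid := [
[[0,0,0,0,0,0,0,0,0,0,0,0,0,0],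
 [0,0,0,0,0,0,0,0,0,0,0,0,0,0],
 [0,0,0,0,0,0,0,0,5,0,0,0,0,0],
 [0,0,0,3,0,4,4,4,3,3,0,0,0,0],
 [0,0,0,3,0,3,4,3,4,4,1,0,0,0],
 [0,0,0,0,2,2,3,3,3,0,0,0,0,0],
 [0,0,4,4,3,1,0,4,3,0,4,4,0,0],
 [0,0,0,1,4,4,4,1,1,4,3,0,0,0],
 [0,0,0,1,1,4,2,4,3,3,3,0,0,0],
 [0,0,0,4,4,2,0,3,4,4,1,0,0,0],
 [0,0,0,0,4,4,3,3,0,0,4,0,0,0],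
 [0,0,0,0,0,4,0,0,0,0,0,0,0,0],
 [0,0,0,0,0,0,0,0,0,0,0,0,0,0],
 [0,0,0,0,0,0,0,0,0,0,0,0,0,0]],
[[0,0,0,0,0,0,0,0,0,0,0,0,0,0],
 [0,0,0,0,0,0,0,1,1,0,0,0,0,0],
 [0,0,0,0,0,0,0,0,0,1,0,0,0,0],
 [0,0,0,3,0,4,4,5,3,4,0,0,0,0],
 [0,0,0,3,0,3,4,3,4,4,1,0,0,0],
 [0,0,0,0,2,2,3,3,3,0,0,0,0,0],
 [0,0,4,4,3,1,0,4,3,0,4,4,0,0],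
 [0,0,0,1,4,4,4,1,1,4,3,0,0,0],
 [0,0,0,1,1,4,2,4,3,3,3,0,0,0],
 [0,0,0,4,4,2,0,3,4,4,1,0,0,0],
 [0,0,0,0,4,4,3,3,0,0,4,0,0,0],
 [0,0,0,0,0,4,0,0,0,0,0,0,0,0],
 [0,0,0,0,0,0,0,0,0,0,0,0,0,0],
 [0,0,0,0,0,0,0,0,0,0,0,0,0,0]],
[[0,0,0,0,0,0,0,0,0,0,0,0,0,0],
 [0,0,0,0,0,0,0,1,1,0,0,0,0,0],
 [0,0,0,0,0,0,1,1,0,1,0,0,0,0],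
 [0,0,0,3,0,4,4,0,4,4,0,0,0,0],
 [0,0,0,3,0,3,5,3,5,4,1,0,0,0],
 [0,0,0,0,2,2,3,3,3,0,0,0,0,0],
 [0,0,4,4,3,1,0,4,3,0,4,4,0,0],
 [0,0,0,1,4,4,4,1,1,4,3,0,0,0],
 [0,0,0,1,1,4,2,4,3,3,3,0,0,0],
 [0,0,0,4,4,2,0,3,4,4,1,0,0,0],
 [0,0,0,0,4,4,3,3,0,0,4,0,0,0],
 [0,0,0,0,0,4,0,0,0,0,0,0,0,0],
 [0,0,0,0,0,0,0,0,0,0,0,0,0,0],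
 [0,0,0,0,0,0,0,0,0,0,0,0,0,0]],
[[0,0,0,0,0,0,0,0,0,0,0,0,0,0],
 [0,0,0,0,0,0,0,1,1,0,0,0,0,0],
 [0,0,0,0,0,0,1,1,0,1,0,0,0,0],
 [0,0,0,3,0,5,5,1,5,4,0,0,0,0],
 [0,0,0,3,0,3,0,4,0,5,1,0,0,0],
 [0,0,0,0,2,3,3,5,3,1,0,0,0,0],
 [0,0,4,4,3,1,0,4,3,0,4,4,0,0],
 [0,0,0,1,4,4,4,1,1,4,3,0,0,0],
 [0,0,0,1,1,4,2,4,3,3,3,0,0,0],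
 [0,0,0,4,4,2,0,3,4,4,1,0,0,0],
 [0,0,0,0,4,4,3,3,0,0,4,0,0,0],
 [0,0,0,0,0,4,0,0,0,0,0,0,0,0],
 [0,0,0,0,0,0,0,0,0,0,0,0,0,0],
 [0,0,0,0,0,0,0,0,0,0,0,0,0,0]],
[[0,0,0,0,0,0,0,0,0,0,0,0,0,0],
 [0,0,0,0,0,0,0,1,1,0,0,0,0,0],
 [0,0,0,0,1,2,2,2,1,1,0,0,0,0],
 [0,0,0,3,0,0,1,2,1,6,0,0,0,0],
 [0,0,0,3,1,4,2,7,0,1,2,0,0,0],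
 [0,0,0,0,2,3,3,0,5,1,1,0,0,0],
 [0,0,4,4,3,1,1,4,4,0,4,4,0,0],
 [0,0,0,1,4,4,4,1,1,4,3,0,0,0],
 [0,0,0,1,1,4,2,4,3,3,3,0,0,0],
 [0,0,0,4,4,2,0,3,4,4,1,0,0,0],
 [0,0,0,0,4,4,3,3,0,0,4,0,0,0],
 [0,0,0,0,0,4,0,0,0,0,0,0,0,0],
 [0,0,0,0,0,0,0,0,0,0,0,0,0,0],
 [0,0,0,0,0,0,0,0,0,0,0,0,0,0]],
[[0,0,0,0,0,0,0,0,0,0,0,0,0,0],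
 [0,0,0,0,0,0,0,1,1,0,0,0,0,0],
 [0,0,0,0,1,2,2,2,2,2,0,0,0,0],
 [0,0,0,3,0,0,2,3,1,1,1,0,0,0],
 [0,0,0,3,1,4,2,3,3,1,3,0,0,0],
 [0,0,0,0,2,3,4,0,1,2,1,0,0,0],
 [0,0,4,4,3,1,1,5,4,1,4,4,0,0],
 [0,0,0,1,4,4,4,1,1,4,3,0,0,0],
 [0,0,0,1,1,4,2,4,3,3,3,0,0,0],
 [0,0,0,4,4,2,0,3,4,4,1,0,0,0],
 [0,0,0,0,4,4,3,3,0,0,4,0,0,0],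
 [0,0,0,0,0,4,0,0,0,0,0,0,0,0],
 [0,0,0,0,0,0,0,0,0,0,0,0,0,0],
 [0,0,0,0,0,0,0,0,0,0,0,0,0,0]],
[[0,0,0,0,0,0,0,0,0,0,0,0,0,0],
 [0,0,0,0,0,0,0,1,1,0,0,0,0,0],
 [0,0,0,0,1,2,2,2,2,2,0,0,0,0],
 [0,0,0,3,0,0,2,3,1,1,1,0,0,0],
 [0,0,0,3,1,4,2,3,3,1,3,0,0,0],
 [0,0,0,0,2,3,5,1,1,2,1,0,0,0],
 [0,0,4,4,3,1,1,0,5,1,4,4,0,0],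
 [0,0,0,1,4,4,5,1,2,4,3,0,0,0],
 [0,0,0,1,1,4,2,4,3,3,3,0,0,0],
 [0,0,0,4,4,2,0,3,4,4,1,0,0,0],
 [0,0,0,0,4,4,3,3,0,0,4,0,0,0],
 [0,0,0,0,0,4,0,0,0,0,0,0,0,0],
 [0,0,0,0,0,0,0,0,0,0,0,0,0,0],
 [0,0,0,0,0,0,0,0,0,0,0,0,0,0]],
[[0,0,0,0,0,0,0,0,0,0,0,0,0,0],
 [0,0,0,0,0,0,0,1,1,0,0,0,0,0],
 [0,0,0,0,1,2,2,2,2,2,0,0,0,0],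
 [0,0,0,3,0,0,2,3,1,1,1,0,0,0],
 [0,0,0,3,1,5,3,3,3,1,3,0,0,0],
 [0,0,0,0,2,3,0,3,2,2,1,0,0,0],
 [0,0,4,4,3,3,2,1,0,2,4,4,0,0],
 [0,0,0,1,4,4,0,3,2,5,3,0,0,0],
 [0,0,0,1,1,5,2,5,3,3,3,0,0,0],
 [0,0,0,4,4,2,0,3,4,4,1,0,0,0],
 [0,0,0,0,4,4,3,3,0,0,4,0,0,0],
 [0,0,0,0,0,4,0,0,0,0,0,0,0,0],
 [0,0,0,0,0,0,0,0,0,0,0,0,0,0],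
 [0,0,0,0,0,0,0,0,0,0,0,0,0,0]],
[[0,0,0,0,0,0,0,0,0,0,0,0,0,0],
 [0,0,0,0,0,0,0,1,1,0,0,0,0,0],
 [0,0,0,0,1,2,2,2,2,2,0,0,0,0],
 [0,0,0,3,1,1,2,3,1,1,1,0,0,0],
 [0,0,0,3,1,0,4,3,3,1,3,0,0,0],
 [0,0,0,0,3,3,1,3,2,2,1,0,0,0],
 [0,0,4,4,3,3,2,1,1,3,4,4,0,0],
 [0,0,0,1,5,5,1,4,2,0,4,0,0,0],
 [0,0,0,1,1,0,3,0,5,3,4,0,0,0],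
 [0,0,0,4,5,2,2,3,5,4,1,0,0,0],
 [0,0,0,0,4,4,3,3,0,0,4,0,0,0],
 [0,0,0,0,0,4,0,0,0,0,0,0,0,0],
 [0,0,0,0,0,0,0,0,0,0,0,0,0,0],
 [0,0,0,0,0,0,0,0,0,0,0,0,0,0]],
[[0,0,0,0,0,0,0,0,0,0,0,0,0,0],
 [0,0,0,0,0,0,0,1,1,0,0,0,0,0],
 [0,0,0,0,1,2,2,2,2,2,0,0,0,0],
 [0,0,0,3,1,1,2,3,1,1,1,0,0,0],
 [0,0,0,3,1,0,4,3,3,1,3,0,0,0],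
 [0,0,0,0,3,3,1,3,2,2,1,0,0,0],
 [0,0,4,5,5,4,2,1,1,3,4,4,0,0],
 [0,0,0,1,0,1,2,5,3,0,4,0,0,0],
 [0,0,0,3,3,1,4,1,1,4,4,0,0,0],
 [0,0,0,4,0,3,2,4,0,6,1,0,0,0],
 [0,0,0,1,4,5,3,4,0,1,4,0,0,0],
 [0,0,0,0,0,4,0,0,0,0,0,0,0,0],
 [0,0,0,0,0,0,0,0,0,0,0,0,0,0],
 [0,0,0,0,0,0,0,0,0,0,0,0,0,0]],
[[0,0,0,0,0,0,0,0,0,0,0,0,0,0],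
 [0,0,0,0,0,0,0,1,1,0,0,0,0,0],
 [0,0,0,0,1,2,2,2,2,2,0,0,0,0],
 [0,0,0,3,1,1,2,3,1,1,1,0,0,0],
 [0,0,0,3,1,0,4,3,3,1,3,0,0,0],
 [0,0,1,2,4,3,1,3,2,2,1,0,0,0],
 [0,0,4,0,1,5,3,2,1,3,4,4,0,0],
 [0,0,1,2,1,2,2,0,4,0,4,0,0,0],
 [0,0,0,3,3,1,5,1,3,5,4,0,0,0],
 [0,0,0,4,1,4,2,4,0,1,2,0,0,0],
 [0,0,0,1,4,0,4,4,1,1,5,0,0,0],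
 [0,0,0,0,1,4,1,0,0,0,0,0,0,0],
 [0,0,0,0,0,0,0,0,0,0,0,0,0,0],
 [0,0,0,0,0,0,0,0,0,0,0,0,0,0]],
[[0,0,0,0,0,0,0,0,0,0,0,0,0,0],
 [0,0,0,0,0,0,0,1,1,0,0,0,0,0],
 [0,0,0,0,1,2,2,2,2,2,0,0,0,0],
 [0,0,0,3,1,1,2,3,1,1,1,0,0,0],
 [0,0,0,3,1,0,4,3,3,1,3,0,0,0],
 [0,0,1,2,5,4,1,3,2,2,1,0,0,0],
 [0,0,4,0,1,0,4,2,1,3,4,4,0,0],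
 [0,0,1,2,2,3,4,0,5,1,4,0,0,0],
 [0,0,0,3,3,1,0,2,3,0,5,0,0,0],
 [0,0,0,4,1,5,2,5,1,2,4,0,0,0],
 [0,0,0,1,4,0,4,4,1,1,0,1,0,0],
 [0,0,0,0,1,4,1,0,0,1,0,1,0,0],
 [0,0,0,0,0,0,0,0,0,0,0,0,0,0],
 [0,0,0,0,0,0,0,0,0,0,0,0,0,0]],
[[0,0,0,0,0,0,0,0,0,0,0,0,0,0],
 [0,0,0,0,0,0,0,1,1,0,0,0,0,0],
 [0,0,0,0,1,2,2,2,2,2,0,0,0,0],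
 [0,0,0,3,1,1,2,3,1,1,1,0,0,0],
 [0,0,0,4,2,0,4,3,3,1,3,0,0,0],
 [0,0,1,2,0,5,1,3,2,2,1,0,0,0],
 [0,0,4,1,1,1,4,3,2,3,4,4,0,0],
 [0,0,1,2,2,3,4,0,0,3,5,0,0,0],
 [0,0,0,3,4,2,1,4,3,1,0,1,0,0],
 [0,0,0,4,1,0,3,0,2,3,4,1,0,0],
 [0,0,0,1,5,0,6,4,2,1,0,1,0,0],
 [0,0,0,0,1,4,1,0,0,1,0,1,0,0],
 [0,0,0,0,0,0,0,0,0,0,0,0,0,0],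
 [0,0,0,0,0,0,0,0,0,0,0,0,0,0]],
[[0,0,0,0,0,0,0,0,0,0,0,0,0,0],
 [0,0,0,0,0,0,0,1,1,0,0,0,0,0],
 [0,0,0,0,1,2,2,2,2,2,0,0,0,0],
 [0,0,0,3,1,1,2,3,1,1,1,0,0,0],
 [0,0,0,4,3,1,4,3,3,1,3,0,0,0],
 [0,0,1,2,0,0,2,3,2,2,1,0,0,0],
 [0,0,4,1,2,1,5,3,2,4,5,4,0,0],
 [0,0,1,2,2,3,4,0,0,3,0,1,0,0],
 [0,0,0,3,4,2,1,4,3,2,0,2,0,0],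
 [0,0,0,5,2,1,4,0,2,3,4,1,0,0],
 [0,0,0,1,0,1,1,5,2,1,0,1,0,0],
 [0,0,0,1,1,6,1,1,0,1,0,1,0,0],
 [0,0,0,0,0,0,0,0,0,0,0,0,0,0],
 [0,0,0,0,0,0,0,0,0,0,0,0,0,0]]]

lemma hθ : θ N5 = 5 := by decide

lemma F_eval (c : Config) (p : Cell) :
    F N5 c p = c p - 5 * (if 5 ≤ c p then 1 else 0)
      + ((if 5 ≤ c (p - (0,1)) then 1 else 0) +
         ((if 5 ≤ c (p - (-1,0)) then 1 else 0) +
          ((if 5 ≤ c (p - (1,1)) then 1 else 0) +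
           ((if 5 ≤ c (p - (1,-1)) then 1 else 0) +
            (if 5 ≤ c (p - (-1,-1)) then 1 else 0))))) := rfl

lemma ent_out (d : Grid) {x y : ℤ} (h : ¬(0 ≤ x ∧ x < 14 ∧ 0 ≤ y ∧ y < 14)) :
    ent d x y = 0 := if_neg h

abbrev RingSmall (d : Grid) : Prop :=
  ∀ i ∈ Finset.Icc (0:ℤ) 13, ∀ j ∈ Finset.Icc (0:ℤ) 13,
    (i = 0 ∨ i = 13 ∨ j = 0 ∨ j = 13) → ent d i j < 5

lemma ent_small_edge (d : Grid) (hr : RingSmall d) {x y : ℤ}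
    (h : x ≤ 0 ∨ 13 ≤ x ∨ y ≤ 0 ∨ 13 ≤ y) : ent d x y < 5 := by
  by_cases hb : 0 ≤ x ∧ x < 14 ∧ 0 ≤ y ∧ y < 14
  · exact hr x (by simp only [Finset.mem_Icc]; omega) y (by simp only [Finset.mem_Icc]; omega)
      (by omega)
  · rw [ent_out d hb]; norm_num

/-- The one-step verification condition on a list of grids. -/
abbrev StepOK (ds : List Grid) : Prop :=
  ∀ t ∈ Finset.range 13, ∀ px ∈ Finset.Icc (-2:ℤ) 11, ∀ py ∈ Finset.Icc (-2:ℤ) 11,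
    (ent (ds.getD t []) (px + 2) (py + 2)
        - 5 * (if 5 ≤ ent (ds.getD t []) (px + 2) (py + 2) then 1 else 0)
      + ((if 5 ≤ ent (ds.getD t []) (px + 2) (py - 1 + 2) then 1 else 0) +
         ((if 5 ≤ ent (ds.getD t []) (px + 1 + 2) (py + 2) then 1 else 0) +
          ((if 5 ≤ ent (ds.getD t []) (px - 1 + 2) (py - 1 + 2) then 1 else 0) +
           ((if 5 ≤ ent (ds.getD t []) (px - 1 + 2) (py + 1 + 2) then 1 else 0) +
            (if 5 ≤ ent (ds.getD t []) (px + 1 + 2) (py + 1 + 2) then 1 else 0))))))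
      = ent (ds.getD (t+1) []) (px + 2) (py + 2)

abbrev AllRingSmall (ds : List Grid) : Prop :=
  ∀ t ∈ Finset.range 14, RingSmall (ds.getD t [])

lemma step_look (ds : List Grid) (hs : StepOK ds) (hr : AllRingSmall ds)
    {t : ℕ} (ht : t < 13) : F N5 (look ds t) = look ds (t+1) := by
  funext p
  obtain ⟨px, py⟩ := p
  rw [F_eval]
  simp only [look, Prod.mk_sub_mk, sub_neg_eq_add, sub_zero, Prod.fst, Prod.snd]
  by_cases hb : 0 ≤ px + 2 ∧ px + 2 < 14 ∧ 0 ≤ py + 2 ∧ py + 2 < 14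
  · exact hs t (by simp only [Finset.mem_range]; omega)
      px (by simp only [Finset.mem_Icc]; omega) py (by simp only [Finset.mem_Icc]; omega)
  · have hrt : RingSmall (ds.getD t []) :=
      hr t (by simp only [Finset.mem_range]; omega)
    have hrt' : RingSmall (ds.getD (t+1) []) :=
      hr (t+1) (by simp only [Finset.mem_range]; omega)
    have h0 : ent (ds.getD t []) (px + 2) (py + 2) = 0 := ent_out _ hb
    erw [if_neg (by omega : ¬ (5 ≤ ent (ds.getD t []) (px + 2) (py + 2))),
      if_neg (by have := ent_small_edge _ hrt (x := px + 2) (y := py - 1 + 2) (by omega); omega),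
      if_neg (by have := ent_small_edge _ hrt (x := px + 1 + 2) (y := py + 2) (by omega); omega),
      if_neg (by have := ent_small_edge _ hrt (x := px - 1 + 2) (y := py - 1 + 2) (by omega); omega),
      if_neg (by have := ent_small_edge _ hrt (x := px - 1 + 2) (y := py + 1 + 2) (by omega); omega),
      if_neg (by have := ent_small_edge _ hrt (x := px + 1 + 2) (y := py + 1 + 2) (by omega); omega),
      h0, ent_out _ hb]

lemma iter_look (ds : List Grid) (hs : StepOK ds) (hr : AllRingSmall ds) :
    ∀ t, t ≤ 13 → (F N5)^[t] (look ds 0) = look ds t := by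
  intro t
  induction t with
  | zero => intro _; rfl
  | succ k ih =>
      intro h
      rw [Function.iterate_succ_apply', ih (by omega), step_look ds hs hr (by omega)]

lemma stepA : StepOK dA := by decide
lemma stepB : StepOK dB := by decide
lemma ringA : AllRingSmall dA := by decide
lemma ringB : AllRingSmall dB := by decide

def gcfg : Config := fun p => ent dG (p.1 + 2) (p.2 + 2)

lemma initOKA : ∀ px ∈ Finset.Icc (-2:ℤ) 11, ∀ py ∈ Finset.Icc (-2:ℤ) 11,
    ent dG (px + 2) (py + 2) + (if ((px, py) : Cell) = ((4:ℤ), (0:ℤ)) then 1 else 0)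
      = ent (dA.getD 0 []) (px + 2) (py + 2) := by decide

lemma initOKB : ∀ px ∈ Finset.Icc (-2:ℤ) 11, ∀ py ∈ Finset.Icc (-2:ℤ) 11,
    ent dG (px + 2) (py + 2) + (if ((px, py) : Cell) = ((0:ℤ), (6:ℤ)) then 1 else 0)
      = ent (dB.getD 0 []) (px + 2) (py + 2) := by decide

lemma stableOK : ∀ i ∈ Finset.Icc (0:ℤ) 13, ∀ j ∈ Finset.Icc (0:ℤ) 13,
    ent dG i j < 5 := by decide

lemma suppOK : ∀ i ∈ Finset.Icc (0:ℤ) 13, ∀ j ∈ Finset.Icc (0:ℤ) 13,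
    (i ≤ 1 ∨ 12 ≤ i ∨ j ≤ 1 ∨ 12 ≤ j) → ent dG i j = 0 := by decide

lemma sideColsA : ∀ t ∈ Finset.range 14, ∀ j ∈ Finset.Icc (0:ℤ) 13,
    ent (dA.getD t []) 2 j < 5 ∧ ent (dA.getD t []) 11 j < 5 := by decide

lemma sideRowsB : ∀ t ∈ Finset.range 14, ∀ i ∈ Finset.Icc (0:ℤ) 13,
    ent (dB.getD t []) i 2 < 5 ∧ ent (dB.getD t []) i 11 < 5 := by decide

lemma finalA : 5 ≤ ent (dA.getD 13 []) 6 11 := by decide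
lemma finalB : 5 ≤ ent (dB.getD 13 []) 11 5 := by decide

lemma initA : gcfg + one ((4:ℤ), (0:ℤ)) = look dA 0 := by
  funext p
  obtain ⟨px, py⟩ := p
  simp only [Pi.add_apply, one, gcfg, look]
  by_cases hb : 0 ≤ px + 2 ∧ px + 2 < 14 ∧ 0 ≤ py + 2 ∧ py + 2 < 14
  · exact initOKA px (by simp only [Finset.mem_Icc]; omega)
      py (by simp only [Finset.mem_Icc]; omega)
  · rw [ent_out _ hb, ent_out _ hb,
      if_neg (by simp only [Prod.mk.injEq]; omega)]

lemma initB : gcfg + one ((0:ℤ), (6:ℤ)) = look dB 0 := by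
  funext p
  obtain ⟨px, py⟩ := p
  simp only [Pi.add_apply, one, gcfg, look]
  by_cases hb : 0 ≤ px + 2 ∧ px + 2 < 14 ∧ 0 ≤ py + 2 ∧ py + 2 < 14
  · exact initOKB px (by simp only [Finset.mem_Icc]; omega)
      py (by simp only [Finset.mem_Icc]; omega)
  · rw [ent_out _ hb, ent_out _ hb,
      if_neg (by simp only [Prod.mk.injEq]; omega)]

theorem nbhd151_timed_crossover :
    ∃ g n e s w, IsTimedCrossoverGate
      ({(0,1),(-1,0),(1,1),(1,-1),(-1,-1)} : Finset Cell) 10 10 13 g n e s w := by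
  have key : ∃ g n e s w, IsTimedCrossoverGate N5 10 10 13 g n e s w := by
    refine ⟨gcfg, ((4:ℤ), (0:ℤ)), ((9:ℤ), (3:ℤ)), ((4:ℤ), (9:ℤ)), ((0:ℤ), (6:ℤ)),
      ?_, ?_, ?_, ?_, ?_, ?_, ?_, ?_, ?_, ?_, 1, 2, 3, 0, ?_, ?_, ?_, ?_, ?_, ?_, ?_, ?_, ?_, ?_, ?_⟩
    · -- Stable
      rintro ⟨px, py⟩
      rw [hθ]
      simp only [gcfg]
      by_cases hb : 0 ≤ px + 2 ∧ px + 2 < 14 ∧ 0 ≤ py + 2 ∧ py + 2 < 14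
      · exact stableOK (px+2) (by simp only [Finset.mem_Icc]; omega)
          (py+2) (by simp only [Finset.mem_Icc]; omega)
      · rw [ent_out _ hb]; norm_num
    · -- support
      rintro ⟨px, py⟩ hp
      simp only [Rect, Set.mem_setOf_eq, not_and, not_lt] at hp
      push_cast at hp
      simp only [gcfg]
      by_cases hb : 0 ≤ px + 2 ∧ px + 2 < 14 ∧ 0 ≤ py + 2 ∧ py + 2 < 14
      · exact suppOK (px+2) (by simp only [Finset.mem_Icc]; omega)
          (py+2) (by simp only [Finset.mem_Icc]; omega) (by omega)
      · exact ent_out _ hb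
    · norm_num [Rect]
    · norm_num [Rect]
    · norm_num [Rect]
    · norm_num [Rect]
    · norm_num [Corners, Prod.ext_iff]
    · norm_num [Corners, Prod.ext_iff]
    · norm_num [Corners, Prod.ext_iff]
    · norm_num [Corners, Prod.ext_iff]
    · exact ⟨rfl, by norm_num, by norm_num⟩
    · exact ⟨rfl, by norm_num, by norm_num⟩
    · exact ⟨rfl, by norm_num, by norm_num⟩
    · exact ⟨rfl, by norm_num, by norm_num⟩
    · decide
    · decide
    · decide
    · -- A signal
      rw [hθ, initA, iter_look dA stepA ringA 13 le_rfl]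
      simp only [look]
      norm_num
      exact finalA
    · -- A sides quiet
      rintro ⟨px, py⟩ hp t ht
      rw [hθ, initA, iter_look dA stepA ringA t ht]
      simp only [side, Set.mem_union, Set.mem_setOf_eq] at hp
      norm_num at hp
      simp only [look]
      have ht' : t ∈ Finset.range 14 := by simp only [Finset.mem_range]; omega
      rcases hp with ⟨h1, h2, h3⟩ | ⟨h1, h2, h3⟩
      · have := (sideColsA t ht' (py+2) (by simp only [Finset.mem_Icc]; omega)).1
        rw [show px + 2 = (2:ℤ) by omega]
        exact this
      · have := (sideColsA t ht' (py+2) (by simp only [Finset.mem_Icc]; omega)).2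
        rw [show px + 2 = (11:ℤ) by omega]
        exact this
    · -- B signal
      rw [hθ, initB, iter_look dB stepB ringB 13 le_rfl]
      simp only [look]
      norm_num
      exact finalB
    · -- B sides quiet
      rintro ⟨px, py⟩ hp t ht
      rw [hθ, initB, iter_look dB stepB ringB t ht]
      simp only [side, Set.mem_union, Set.mem_setOf_eq] at hp
      norm_num at hp
      simp only [look]
      have ht' : t ∈ Finset.range 14 := by simp only [Finset.mem_range]; omega
      rcases hp with ⟨h1, h2, h3⟩ | ⟨h1, h2, h3⟩
      · have := (sideRowsB t ht' (px+2) (by simp only [Finset.mem_Icc]; omega)).1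
        rw [show py + 2 = (2:ℤ) by omega]
        exact this
      · have := (sideRowsB t ht' (px+2) (by simp only [Finset.mem_Icc]; omega)).2
        rw [show py + 2 = (11:ℤ) by omega]
        exact this
  exact key


end Sandpile
end

section
/- The neighborhood N = {(0,1), (1,0), (−1,0), (1,1), (1,−1), (−1,−1)} (neighborhood 215 in the 8-bit numbering of subsets of the Moore neighborhood) admits a timed crossover gate of size 12 × 12 and delay 17. -/
namespace Sandpile

set_option maxRecDepth 1000000

def NB : Finset Cell := {(0,1),(1,0),(-1,0),(1,1),(1,-1),(-1,-1)}

def G (c : Config) : Config := fun p =>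
  c p - 6 * (if 6 ≤ c p then 1 else 0)
    + ((if 6 ≤ c (p - ((0:ℤ),(1:ℤ))) then 1 else 0)
     + ((if 6 ≤ c (p - ((1:ℤ),(0:ℤ))) then 1 else 0)
     + ((if 6 ≤ c (p - ((-1:ℤ),(0:ℤ))) then 1 else 0)
     + ((if 6 ≤ c (p - ((1:ℤ),(1:ℤ))) then 1 else 0)
     + ((if 6 ≤ c (p - ((1:ℤ),(-1:ℤ))) then 1 else 0)
     + ((if 6 ≤ c (p - ((-1:ℤ),(-1:ℤ))) then 1 else 0)
     + 0))))))

lemma F_eq_G (c : Config) : F NB c = G c := rfl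

lemma theta_NB : θ NB = 6 := rfl

def tb (rows : List (List ℕ)) : Config := fun p =>
  (rows.getD (p.2 + 2).toNat []).getD (p.1 + 2).toNat 0

noncomputable def boxF : Finset Cell := Finset.Icc (-1:ℤ) 12 ×ˢ Finset.Icc (-1:ℤ) 12
noncomputable def innerF : Finset Cell := Finset.Icc (0:ℤ) 11 ×ˢ Finset.Icc (0:ℤ) 11

abbrev TOK (rows : List (List ℕ)) : Prop := rows.length ≤ 15 ∧ rows.getD 0 [] = [] ∧
  ∀ k ∈ Finset.range 15, (rows.getD k []).length ≤ 15 ∧ (rows.getD k []).getD 0 0 = 0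

lemma tb_out_of (rows : List (List ℕ)) (h : TOK rows) (p : Cell)
    (hp : p.1 ≤ -2 ∨ 13 ≤ p.1 ∨ p.2 ≤ -2 ∨ 13 ≤ p.2) : tb rows p = 0 := by
  obtain ⟨h1, h2, h3⟩ := h
  unfold tb
  by_cases hk : (p.2 + 2).toNat < 15
  · obtain ⟨hl, hz⟩ := h3 _ (Finset.mem_range.mpr hk)
    rcases hp with hp | hp | hp | hp
    · rw [show (p.1 + 2).toNat = 0 by omega]; exact hz
    · exact List.getD_eq_default _ _ (by omega)
    · rw [show (p.2 + 2).toNat = 0 by omega, h2]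
      exact List.getD_eq_default _ _ (by simp)
    · omega
  · rw [List.getD_eq_default _ _ (by omega : rows.length ≤ (p.2 + 2).toNat)]
    exact List.getD_eq_default _ _ (by simp)

lemma edge_small_of (A : List (List ℕ)) (hT : TOK A)
    (hE : ∀ q ∈ boxF, q ∉ innerF → tb A q < 6) :
    ∀ q : Cell, (q.1 < 0 ∨ 11 < q.1 ∨ q.2 < 0 ∨ 11 < q.2) → tb A q < 6 := by
  intro q hq
  by_cases hb : q ∈ boxF
  · refine hE q hb ?_
    simp only [innerF, Finset.mem_product, Finset.mem_Icc]
    omega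
  · have h0 : tb A q = 0 := by
      apply tb_out_of A hT
      simp only [boxF, Finset.mem_product, Finset.mem_Icc] at hb
      omega
    omega

lemma sub_fst (p : Cell) (a b : ℤ) : (p - (a, b)).1 = p.1 - a := rfl
lemma sub_snd (p : Cell) (a b : ℤ) : (p - (a, b)).2 = p.2 - b := rfl

lemma G_out (c : Config) (p : Cell) (h0 : c p = 0)
    (n1 : c (p - ((0:ℤ),(1:ℤ))) < 6) (n2 : c (p - ((1:ℤ),(0:ℤ))) < 6)
    (n3 : c (p - ((-1:ℤ),(0:ℤ))) < 6) (n4 : c (p - ((1:ℤ),(1:ℤ))) < 6)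
    (n5 : c (p - ((1:ℤ),(-1:ℤ))) < 6) (n6 : c (p - ((-1:ℤ),(-1:ℤ))) < 6) :
    G c p = 0 := by
  unfold G
  rw [h0, if_neg (by omega : ¬ (6:ℕ) ≤ 0), if_neg (Nat.not_le.mpr n1),
    if_neg (Nat.not_le.mpr n2), if_neg (Nat.not_le.mpr n3), if_neg (Nat.not_le.mpr n4),
    if_neg (Nat.not_le.mpr n5), if_neg (Nat.not_le.mpr n6)]

lemma step_of (A B : List (List ℕ)) (hTA : TOK A) (hTB : TOK B)
    (hE : ∀ q ∈ boxF, q ∉ innerF → tb A q < 6)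
    (hin : ∀ p ∈ boxF, G (tb A) p = tb B p) :
    F NB (tb A) = tb B := by
  funext p
  rw [F_eq_G]
  by_cases hb : p ∈ boxF
  · exact hin p hb
  · have hout : p.1 ≤ -2 ∨ 13 ≤ p.1 ∨ p.2 ≤ -2 ∨ 13 ≤ p.2 := by
      simp only [boxF, Finset.mem_product, Finset.mem_Icc] at hb; omega
    have esm := edge_small_of A hTA hE
    have hq : ∀ a b : ℤ, (p.1 - a < 0 ∨ 11 < p.1 - a ∨ p.2 - b < 0 ∨ 11 < p.2 - b) →
        tb A (p - (a, b)) < 6 := by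
      intro a b h
      exact esm _ (by simp only [sub_fst, sub_snd]; exact h)
    rw [tb_out_of B hTB p hout]
    exact G_out (tb A) p (tb_out_of A hTA p hout)
      (hq 0 1 (by omega)) (hq 1 0 (by omega)) (hq (-1) 0 (by omega))
      (hq 1 1 (by omega)) (hq 1 (-1) (by omega)) (hq (-1) (-1) (by omega))

lemma init_of (Gt A : List (List ℕ)) (q : Cell) (hq : q ∈ boxF)
    (hTG : TOK Gt) (hTA : TOK A)
    (hin : ∀ p ∈ boxF, tb Gt p + one q p = tb A p) :
    tb Gt + one q = tb A := by
  funext p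
  by_cases hb : p ∈ boxF
  · exact hin p hb
  · have hout : p.1 ≤ -2 ∨ 13 ≤ p.1 ∨ p.2 ≤ -2 ∨ 13 ≤ p.2 := by
      simp only [boxF, Finset.mem_product, Finset.mem_Icc] at hb; omega
    have h1 : tb Gt p = 0 := tb_out_of Gt hTG p hout
    have h2 : tb A p = 0 := tb_out_of A hTA p hout
    have h3 : one q p = 0 := by
      unfold one
      exact if_neg (fun h => hb (by rw [h]; exact hq))
    show tb Gt p + one q p = tb A p
    rw [h1, h2, h3]

lemma side0 : side 12 12 0 = {p : Cell | p.1 = 0 ∧ 0 ≤ p.2 ∧ p.2 < 12} := rfl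
lemma side1 : side 12 12 1 = {p : Cell | p.2 = 0 ∧ 0 ≤ p.1 ∧ p.1 < 12} := rfl
lemma side2 : side 12 12 2 = {p : Cell | p.1 = 11 ∧ 0 ≤ p.2 ∧ p.2 < 12} := by
  show (if (2:Fin 4) = 0 then _ else if (2:Fin 4) = 1 then _ else if (2:Fin 4) = 2 then _ else _) = _
  norm_num
  rfl
lemma side3 : side 12 12 3 = {p : Cell | p.2 = 11 ∧ 0 ≤ p.1 ∧ p.1 < 12} := by
  show (if (3:Fin 4) = 0 then _ else if (3:Fin 4) = 1 then _ else if (3:Fin 4) = 2 then _ else _) = _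
  norm_num
  rfl

noncomputable def sideWEF : Finset Cell := ({0, 11} : Finset ℤ) ×ˢ Finset.Icc (0:ℤ) 11
noncomputable def sideNSF : Finset Cell := Finset.Icc (0:ℤ) 11 ×ˢ ({0, 11} : Finset ℤ)

lemma quietWE (A : List (List ℕ)) (h : ∀ q ∈ sideWEF, tb A q < 6) :
    ∀ p ∈ side 12 12 0 ∪ side 12 12 2, tb A p < θ NB := by
  intro p hp
  rw [theta_NB]
  rcases hp with hh | hh
  · rw [side0] at hh
    obtain ⟨a1, a2, a3⟩ := hh
    exact h p (by
      simp only [sideWEF, Finset.mem_product, Finset.mem_insert, Finset.mem_singleton,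
        Finset.mem_Icc]
      omega)
  · rw [side2] at hh
    obtain ⟨a1, a2, a3⟩ := hh
    exact h p (by
      simp only [sideWEF, Finset.mem_product, Finset.mem_insert, Finset.mem_singleton,
        Finset.mem_Icc]
      omega)

lemma quietNS (A : List (List ℕ)) (h : ∀ q ∈ sideNSF, tb A q < 6) :
    ∀ p ∈ side 12 12 3 ∪ side 12 12 1, tb A p < θ NB := by
  intro p hp
  rw [theta_NB]
  rcases hp with hh | hh
  · rw [side3] at hh
    obtain ⟨a1, a2, a3⟩ := hh
    exact h p (by
      simp only [sideNSF, Finset.mem_product, Finset.mem_insert, Finset.mem_singleton,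
        Finset.mem_Icc]
      omega)
  · rw [side1] at hh
    obtain ⟨a1, a2, a3⟩ := hh
    exact h p (by
      simp only [sideNSF, Finset.mem_product, Finset.mem_insert, Finset.mem_singleton,
        Finset.mem_Icc]
      omega)

def GT : List (List ℕ) := [[], [0,0,0,0,0,0,0,0,0,0,0,0,0,0,0], [0,0,0,0,0,0,0,5,0,0,0,0,0,0,0], [0,0,0,0,0,0,5,0,0,0,0,0,0,0,0], [0,0,0,0,0,5,0,0,0,0,0,0,0,0,0], [0,0,0,0,5,0,0,0,0,0,0,0,0,0,0], [0,0,0,5,5,5,5,5,5,5,0,0,0,0,0], [0,0,0,0,0,0,3,3,0,5,5,3,4,0,0], [0,0,0,5,4,4,5,4,3,5,0,4,5,4,0], [0,0,5,5,3,3,2,3,3,2,5,5,0,3,0], [0,0,0,5,4,4,4,1,5,4,0,2,5,4,0], [0,0,0,0,0,0,4,3,5,5,2,1,3,0,0], [0,0,0,0,0,5,0,5,0,0,0,0,0,0,0], [0,0,0,0,0,0,5,0,0,0,0,0,0,0,0], [0,0,0,0,0,0,0,0,0,0,0,0,0,0,0]]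
def A0 : List (List ℕ) := [[], [0,0,0,0,0,0,0,0,0,0,0,0,0,0,0], [0,0,0,0,0,0,0,5,0,0,0,0,0,0,0], [0,0,0,0,0,0,5,0,0,0,0,0,0,0,0], [0,0,0,0,0,5,0,0,0,0,0,0,0,0,0], [0,0,0,0,5,0,0,0,0,0,0,0,0,0,0], [0,0,0,5,5,5,5,5,5,5,0,0,0,0,0], [0,0,0,0,0,0,3,3,0,5,5,3,4,0,0], [0,0,0,5,4,4,5,4,3,5,0,4,5,4,0], [0,0,5,5,3,3,2,3,3,2,5,5,0,3,0], [0,0,0,5,4,4,4,1,5,4,0,2,5,4,0], [0,0,0,0,0,0,4,3,5,5,2,1,3,0,0], [0,0,0,0,0,5,0,5,0,0,0,0,0,0,0], [0,0,0,0,0,0,6,0,0,0,0,0,0,0,0], [0,0,0,0,0,0,0,0,0,0,0,0,0,0,0]]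
def A1 : List (List ℕ) := [[], [0,0,0,0,0,0,0,0,0,0,0,0,0,0,0], [0,0,0,0,0,0,0,5,0,0,0,0,0,0,0], [0,0,0,0,0,0,5,0,0,0,0,0,0,0,0], [0,0,0,0,0,5,0,0,0,0,0,0,0,0,0], [0,0,0,0,5,0,0,0,0,0,0,0,0,0,0], [0,0,0,5,5,5,5,5,5,5,0,0,0,0,0], [0,0,0,0,0,0,3,3,0,5,5,3,4,0,0], [0,0,0,5,4,4,5,4,3,5,0,4,5,4,0], [0,0,5,5,3,3,2,3,3,2,5,5,0,3,0], [0,0,0,5,4,4,4,1,5,4,0,2,5,4,0], [0,0,0,0,0,0,4,3,5,5,2,1,3,0,0], [0,0,0,0,0,6,0,6,0,0,0,0,0,0,0], [0,0,0,0,0,1,0,1,0,0,0,0,0,0,0], [0,0,0,0,0,0,1,1,0,0,0,0,0,0,0]]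
def A2 : List (List ℕ) := [[], [0,0,0,0,0,0,0,0,0,0,0,0,0,0,0], [0,0,0,0,0,0,0,5,0,0,0,0,0,0,0], [0,0,0,0,0,0,5,0,0,0,0,0,0,0,0], [0,0,0,0,0,5,0,0,0,0,0,0,0,0,0], [0,0,0,0,5,0,0,0,0,0,0,0,0,0,0], [0,0,0,5,5,5,5,5,5,5,0,0,0,0,0], [0,0,0,0,0,0,3,3,0,5,5,3,4,0,0], [0,0,0,5,4,4,5,4,3,5,0,4,5,4,0], [0,0,5,5,3,3,2,3,3,2,5,5,0,3,0], [0,0,0,5,4,4,4,1,5,4,0,2,5,4,0], [0,0,0,0,1,0,6,3,6,5,2,1,3,0,0], [0,0,0,0,1,0,2,0,1,0,0,0,0,0,0], [0,0,0,0,0,2,1,2,1,0,0,0,0,0,0], [0,0,0,0,0,0,1,1,0,0,0,0,0,0,0]]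
def A3 : List (List ℕ) := [[], [0,0,0,0,0,0,0,0,0,0,0,0,0,0,0], [0,0,0,0,0,0,0,5,0,0,0,0,0,0,0], [0,0,0,0,0,0,5,0,0,0,0,0,0,0,0], [0,0,0,0,0,5,0,0,0,0,0,0,0,0,0], [0,0,0,0,5,0,0,0,0,0,0,0,0,0,0], [0,0,0,5,5,5,5,5,5,5,0,0,0,0,0], [0,0,0,0,0,0,3,3,0,5,5,3,4,0,0], [0,0,0,5,4,4,5,4,3,5,0,4,5,4,0], [0,0,5,5,3,3,2,3,3,2,5,5,0,3,0], [0,0,0,5,4,5,4,3,5,5,0,2,5,4,0], [0,0,0,0,1,1,0,5,0,6,2,1,3,0,0], [0,0,0,0,1,0,3,1,2,1,0,0,0,0,0], [0,0,0,0,0,2,1,2,1,0,0,0,0,0,0], [0,0,0,0,0,0,1,1,0,0,0,0,0,0,0]]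
def A4 : List (List ℕ) := [[], [0,0,0,0,0,0,0,0,0,0,0,0,0,0,0], [0,0,0,0,0,0,0,5,0,0,0,0,0,0,0], [0,0,0,0,0,0,5,0,0,0,0,0,0,0,0], [0,0,0,0,0,5,0,0,0,0,0,0,0,0,0], [0,0,0,0,5,0,0,0,0,0,0,0,0,0,0], [0,0,0,5,5,5,5,5,5,5,0,0,0,0,0], [0,0,0,0,0,0,3,3,0,5,5,3,4,0,0], [0,0,0,5,4,4,5,4,3,5,0,4,5,4,0], [0,0,5,5,3,3,2,3,3,2,5,5,0,3,0], [0,0,0,5,4,5,4,3,6,5,1,2,5,4,0], [0,0,0,0,1,1,0,5,1,0,3,1,3,0,0], [0,0,0,0,1,0,3,1,2,2,1,0,0,0,0], [0,0,0,0,0,2,1,2,1,0,0,0,0,0,0], [0,0,0,0,0,0,1,1,0,0,0,0,0,0,0]]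
def A5 : List (List ℕ) := [[], [0,0,0,0,0,0,0,0,0,0,0,0,0,0,0], [0,0,0,0,0,0,0,5,0,0,0,0,0,0,0], [0,0,0,0,0,0,5,0,0,0,0,0,0,0,0], [0,0,0,0,0,5,0,0,0,0,0,0,0,0,0], [0,0,0,0,5,0,0,0,0,0,0,0,0,0,0], [0,0,0,5,5,5,5,5,5,5,0,0,0,0,0], [0,0,0,0,0,0,3,3,0,5,5,3,4,0,0], [0,0,0,5,4,4,5,4,3,5,0,4,5,4,0], [0,0,5,5,3,3,2,4,3,3,5,5,0,3,0], [0,0,0,5,4,5,4,4,0,6,1,2,5,4,0], [0,0,0,0,1,1,0,5,2,1,3,1,3,0,0], [0,0,0,0,1,0,3,1,2,2,1,0,0,0,0], [0,0,0,0,0,2,1,2,1,0,0,0,0,0,0], [0,0,0,0,0,0,1,1,0,0,0,0,0,0,0]]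
def A6 : List (List ℕ) := [[], [0,0,0,0,0,0,0,0,0,0,0,0,0,0,0], [0,0,0,0,0,0,0,5,0,0,0,0,0,0,0], [0,0,0,0,0,0,5,0,0,0,0,0,0,0,0], [0,0,0,0,0,5,0,0,0,0,0,0,0,0,0], [0,0,0,0,5,0,0,0,0,0,0,0,0,0,0], [0,0,0,5,5,5,5,5,5,5,0,0,0,0,0], [0,0,0,0,0,0,3,3,0,5,5,3,4,0,0], [0,0,0,5,4,4,5,4,3,5,0,4,5,4,0], [0,0,5,5,3,3,2,4,4,3,6,5,0,3,0], [0,0,0,5,4,5,4,4,1,0,2,2,5,4,0], [0,0,0,0,1,1,0,5,2,2,4,1,3,0,0], [0,0,0,0,1,0,3,1,2,2,1,0,0,0,0], [0,0,0,0,0,2,1,2,1,0,0,0,0,0,0], [0,0,0,0,0,0,1,1,0,0,0,0,0,0,0]]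
def A7 : List (List ℕ) := [[], [0,0,0,0,0,0,0,0,0,0,0,0,0,0,0], [0,0,0,0,0,0,0,5,0,0,0,0,0,0,0], [0,0,0,0,0,0,5,0,0,0,0,0,0,0,0], [0,0,0,0,0,5,0,0,0,0,0,0,0,0,0], [0,0,0,0,5,0,0,0,0,0,0,0,0,0,0], [0,0,0,5,5,5,5,5,5,5,0,0,0,0,0], [0,0,0,0,0,0,3,3,0,5,5,3,4,0,0], [0,0,0,5,4,4,5,4,3,6,0,5,5,4,0], [0,0,5,5,3,3,2,4,4,4,0,6,0,3,0], [0,0,0,5,4,5,4,4,1,0,3,3,5,4,0], [0,0,0,0,1,1,0,5,2,2,4,1,3,0,0], [0,0,0,0,1,0,3,1,2,2,1,0,0,0,0], [0,0,0,0,0,2,1,2,1,0,0,0,0,0,0], [0,0,0,0,0,0,1,1,0,0,0,0,0,0,0]]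
def A8 : List (List ℕ) := [[], [0,0,0,0,0,0,0,0,0,0,0,0,0,0,0], [0,0,0,0,0,0,0,5,0,0,0,0,0,0,0], [0,0,0,0,0,0,5,0,0,0,0,0,0,0,0], [0,0,0,0,0,5,0,0,0,0,0,0,0,0,0], [0,0,0,0,5,0,0,0,0,0,0,0,0,0,0], [0,0,0,5,5,5,5,5,5,5,0,0,0,0,0], [0,0,0,0,0,0,3,3,1,5,6,3,4,0,0], [0,0,0,5,4,4,5,4,4,0,2,5,6,4,0], [0,0,5,5,3,3,2,4,4,5,2,0,1,3,0], [0,0,0,5,4,5,4,4,1,0,3,4,6,4,0], [0,0,0,0,1,1,0,5,2,2,4,1,3,0,0], [0,0,0,0,1,0,3,1,2,2,1,0,0,0,0], [0,0,0,0,0,2,1,2,1,0,0,0,0,0,0], [0,0,0,0,0,0,1,1,0,0,0,0,0,0,0]]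
def A9 : List (List ℕ) := [[], [0,0,0,0,0,0,0,0,0,0,0,0,0,0,0], [0,0,0,0,0,0,0,5,0,0,0,0,0,0,0], [0,0,0,0,0,0,5,0,0,0,0,0,0,0,0], [0,0,0,0,0,5,0,0,0,0,0,0,0,0,0], [0,0,0,0,5,0,0,0,0,0,0,0,0,0,0], [0,0,0,5,5,5,5,5,5,6,0,1,0,0,0], [0,0,0,0,0,0,3,3,1,6,0,5,4,1,0], [0,0,0,5,4,4,5,4,4,0,3,7,0,5,0], [0,0,5,5,3,3,2,4,4,5,2,1,2,5,0], [0,0,0,5,4,5,4,4,1,0,3,5,0,5,0], [0,0,0,0,1,1,0,5,2,2,4,1,4,1,0], [0,0,0,0,1,0,3,1,2,2,1,0,0,0,0], [0,0,0,0,0,2,1,2,1,0,0,0,0,0,0], [0,0,0,0,0,0,1,1,0,0,0,0,0,0,0]]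
def A10 : List (List ℕ) := [[], [0,0,0,0,0,0,0,0,0,0,0,0,0,0,0], [0,0,0,0,0,0,0,5,0,0,0,0,0,0,0], [0,0,0,0,0,0,5,0,0,0,0,0,0,0,0], [0,0,0,0,0,5,0,0,0,0,0,0,0,0,0], [0,0,0,0,5,0,0,0,1,0,1,0,0,0,0], [0,0,0,5,5,5,5,5,7,0,2,1,0,0,0], [0,0,0,0,0,0,3,3,2,1,3,5,5,1,0], [0,0,0,5,4,4,5,4,4,1,5,1,1,5,0], [0,0,5,5,3,3,2,4,4,5,2,2,3,5,0], [0,0,0,5,4,5,4,4,1,0,3,5,0,5,0], [0,0,0,0,1,1,0,5,2,2,4,1,4,1,0], [0,0,0,0,1,0,3,1,2,2,1,0,0,0,0], [0,0,0,0,0,2,1,2,1,0,0,0,0,0,0], [0,0,0,0,0,0,1,1,0,0,0,0,0,0,0]]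
def A11 : List (List ℕ) := [[], [0,0,0,0,0,0,0,0,0,0,0,0,0,0,0], [0,0,0,0,0,0,0,5,0,0,0,0,0,0,0], [0,0,0,0,0,0,5,0,0,0,0,0,0,0,0], [0,0,0,0,0,5,0,0,0,0,0,0,0,0,0], [0,0,0,0,5,0,0,1,1,1,1,0,0,0,0], [0,0,0,5,5,5,5,6,1,1,2,1,0,0,0], [0,0,0,0,0,0,3,3,3,2,3,5,5,1,0], [0,0,0,5,4,4,5,4,4,1,5,1,1,5,0], [0,0,5,5,3,3,2,4,4,5,2,2,3,5,0], [0,0,0,5,4,5,4,4,1,0,3,5,0,5,0], [0,0,0,0,1,1,0,5,2,2,4,1,4,1,0], [0,0,0,0,1,0,3,1,2,2,1,0,0,0,0], [0,0,0,0,0,2,1,2,1,0,0,0,0,0,0], [0,0,0,0,0,0,1,1,0,0,0,0,0,0,0]]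
def A12 : List (List ℕ) := [[], [0,0,0,0,0,0,0,0,0,0,0,0,0,0,0], [0,0,0,0,0,0,0,5,0,0,0,0,0,0,0], [0,0,0,0,0,0,5,0,0,0,0,0,0,0,0], [0,0,0,0,0,5,0,0,0,0,0,0,0,0,0], [0,0,0,0,5,0,1,1,2,1,1,0,0,0,0], [0,0,0,5,5,5,6,0,2,1,2,1,0,0,0], [0,0,0,0,0,0,3,4,4,2,3,5,5,1,0], [0,0,0,5,4,4,5,4,4,1,5,1,1,5,0], [0,0,5,5,3,3,2,4,4,5,2,2,3,5,0], [0,0,0,5,4,5,4,4,1,0,3,5,0,5,0], [0,0,0,0,1,1,0,5,2,2,4,1,4,1,0], [0,0,0,0,1,0,3,1,2,2,1,0,0,0,0], [0,0,0,0,0,2,1,2,1,0,0,0,0,0,0], [0,0,0,0,0,0,1,1,0,0,0,0,0,0,0]]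
def A13 : List (List ℕ) := [[], [0,0,0,0,0,0,0,0,0,0,0,0,0,0,0], [0,0,0,0,0,0,0,5,0,0,0,0,0,0,0], [0,0,0,0,0,0,5,0,0,0,0,0,0,0,0], [0,0,0,0,0,5,0,0,0,0,0,0,0,0,0], [0,0,0,0,5,1,1,2,2,1,1,0,0,0,0], [0,0,0,5,5,6,0,1,2,1,2,1,0,0,0], [0,0,0,0,0,0,4,5,4,2,3,5,5,1,0], [0,0,0,5,4,4,5,4,4,1,5,1,1,5,0], [0,0,5,5,3,3,2,4,4,5,2,2,3,5,0], [0,0,0,5,4,5,4,4,1,0,3,5,0,5,0], [0,0,0,0,1,1,0,5,2,2,4,1,4,1,0], [0,0,0,0,1,0,3,1,2,2,1,0,0,0,0], [0,0,0,0,0,2,1,2,1,0,0,0,0,0,0], [0,0,0,0,0,0,1,1,0,0,0,0,0,0,0]]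
def A14 : List (List ℕ) := [[], [0,0,0,0,0,0,0,0,0,0,0,0,0,0,0], [0,0,0,0,0,0,0,5,0,0,0,0,0,0,0], [0,0,0,0,0,0,5,0,0,0,0,0,0,0,0], [0,0,0,0,0,5,0,0,0,0,0,0,0,0,0], [0,0,0,0,6,1,2,2,2,1,1,0,0,0,0], [0,0,0,5,6,0,1,1,2,1,2,1,0,0,0], [0,0,0,0,0,1,5,5,4,2,3,5,5,1,0], [0,0,0,5,4,4,5,4,4,1,5,1,1,5,0], [0,0,5,5,3,3,2,4,4,5,2,2,3,5,0], [0,0,0,5,4,5,4,4,1,0,3,5,0,5,0], [0,0,0,0,1,1,0,5,2,2,4,1,4,1,0], [0,0,0,0,1,0,3,1,2,2,1,0,0,0,0], [0,0,0,0,0,2,1,2,1,0,0,0,0,0,0], [0,0,0,0,0,0,1,1,0,0,0,0,0,0,0]]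
def A15 : List (List ℕ) := [[], [0,0,0,0,0,0,0,0,0,0,0,0,0,0,0], [0,0,0,0,0,0,0,5,0,0,0,0,0,0,0], [0,0,0,0,0,0,5,0,0,0,0,0,0,0,0], [0,0,0,1,0,6,0,0,0,0,0,0,0,0,0], [0,0,0,2,0,3,2,2,2,1,1,0,0,0,0], [0,0,0,6,1,2,1,1,2,1,2,1,0,0,0], [0,0,0,0,1,2,5,5,4,2,3,5,5,1,0], [0,0,0,5,4,4,5,4,4,1,5,1,1,5,0], [0,0,5,5,3,3,2,4,4,5,2,2,3,5,0], [0,0,0,5,4,5,4,4,1,0,3,5,0,5,0], [0,0,0,0,1,1,0,5,2,2,4,1,4,1,0], [0,0,0,0,1,0,3,1,2,2,1,0,0,0,0], [0,0,0,0,0,2,1,2,1,0,0,0,0,0,0], [0,0,0,0,0,0,1,1,0,0,0,0,0,0,0]]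
def A16 : List (List ℕ) := [[], [0,0,0,0,0,0,0,0,0,0,0,0,0,0,0], [0,0,0,0,0,0,0,5,0,0,0,0,0,0,0], [0,0,0,0,1,0,6,0,0,0,0,0,0,0,0], [0,0,0,1,1,0,1,0,0,0,0,0,0,0,0], [0,0,1,2,1,4,3,2,2,1,1,0,0,0,0], [0,0,1,0,2,2,1,1,2,1,2,1,0,0,0], [0,0,0,1,2,2,5,5,4,2,3,5,5,1,0], [0,0,0,5,4,4,5,4,4,1,5,1,1,5,0], [0,0,5,5,3,3,2,4,4,5,2,2,3,5,0], [0,0,0,5,4,5,4,4,1,0,3,5,0,5,0], [0,0,0,0,1,1,0,5,2,2,4,1,4,1,0], [0,0,0,0,1,0,3,1,2,2,1,0,0,0,0], [0,0,0,0,0,2,1,2,1,0,0,0,0,0,0], [0,0,0,0,0,0,1,1,0,0,0,0,0,0,0]]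
def A17 : List (List ℕ) := [[], [0,0,0,0,0,0,0,0,0,0,0,0,0,0,0], [0,0,0,0,0,1,0,6,0,0,0,0,0,0,0], [0,0,0,0,1,1,0,1,0,0,0,0,0,0,0], [0,0,0,1,1,0,2,1,0,0,0,0,0,0,0], [0,0,1,2,1,4,3,2,2,1,1,0,0,0,0], [0,0,1,0,2,2,1,1,2,1,2,1,0,0,0], [0,0,0,1,2,2,5,5,4,2,3,5,5,1,0], [0,0,0,5,4,4,5,4,4,1,5,1,1,5,0], [0,0,5,5,3,3,2,4,4,5,2,2,3,5,0], [0,0,0,5,4,5,4,4,1,0,3,5,0,5,0], [0,0,0,0,1,1,0,5,2,2,4,1,4,1,0], [0,0,0,0,1,0,3,1,2,2,1,0,0,0,0], [0,0,0,0,0,2,1,2,1,0,0,0,0,0,0], [0,0,0,0,0,0,1,1,0,0,0,0,0,0,0]]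
def B0 : List (List ℕ) := [[], [0,0,0,0,0,0,0,0,0,0,0,0,0,0,0], [0,0,0,0,0,0,0,5,0,0,0,0,0,0,0], [0,0,0,0,0,0,5,0,0,0,0,0,0,0,0], [0,0,0,0,0,5,0,0,0,0,0,0,0,0,0], [0,0,0,0,5,0,0,0,0,0,0,0,0,0,0], [0,0,0,5,5,5,5,5,5,5,0,0,0,0,0], [0,0,0,0,0,0,3,3,0,5,5,3,4,0,0], [0,0,0,5,4,4,5,4,3,5,0,4,5,4,0], [0,0,6,5,3,3,2,3,3,2,5,5,0,3,0], [0,0,0,5,4,4,4,1,5,4,0,2,5,4,0], [0,0,0,0,0,0,4,3,5,5,2,1,3,0,0], [0,0,0,0,0,5,0,5,0,0,0,0,0,0,0], [0,0,0,0,0,0,5,0,0,0,0,0,0,0,0], [0,0,0,0,0,0,0,0,0,0,0,0,0,0,0]]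
def B1 : List (List ℕ) := [[], [0,0,0,0,0,0,0,0,0,0,0,0,0,0,0], [0,0,0,0,0,0,0,5,0,0,0,0,0,0,0], [0,0,0,0,0,0,5,0,0,0,0,0,0,0,0], [0,0,0,0,0,5,0,0,0,0,0,0,0,0,0], [0,0,0,0,5,0,0,0,0,0,0,0,0,0,0], [0,0,0,5,5,5,5,5,5,5,0,0,0,0,0], [0,0,0,0,0,0,3,3,0,5,5,3,4,0,0], [0,1,0,6,4,4,5,4,3,5,0,4,5,4,0], [0,1,0,6,3,3,2,3,3,2,5,5,0,3,0], [0,0,1,6,4,4,4,1,5,4,0,2,5,4,0], [0,0,0,0,0,0,4,3,5,5,2,1,3,0,0], [0,0,0,0,0,5,0,5,0,0,0,0,0,0,0], [0,0,0,0,0,0,5,0,0,0,0,0,0,0,0], [0,0,0,0,0,0,0,0,0,0,0,0,0,0,0]]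
def B2 : List (List ℕ) := [[], [0,0,0,0,0,0,0,0,0,0,0,0,0,0,0], [0,0,0,0,0,0,0,5,0,0,0,0,0,0,0], [0,0,0,0,0,0,5,0,0,0,0,0,0,0,0], [0,0,0,0,0,5,0,0,0,0,0,0,0,0,0], [0,0,0,0,5,0,0,0,0,0,0,0,0,0,0], [0,0,0,5,5,5,5,5,5,5,0,0,0,0,0], [0,0,1,0,1,0,3,3,0,5,5,3,4,0,0], [0,1,2,0,6,4,5,4,3,5,0,4,5,4,0], [0,1,2,1,6,3,2,3,3,2,5,5,0,3,0], [0,0,2,1,6,4,4,1,5,4,0,2,5,4,0], [0,0,0,1,1,0,4,3,5,5,2,1,3,0,0], [0,0,0,0,0,5,0,5,0,0,0,0,0,0,0], [0,0,0,0,0,0,5,0,0,0,0,0,0,0,0], [0,0,0,0,0,0,0,0,0,0,0,0,0,0,0]]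
def B3 : List (List ℕ) := [[], [0,0,0,0,0,0,0,0,0,0,0,0,0,0,0], [0,0,0,0,0,0,0,5,0,0,0,0,0,0,0], [0,0,0,0,0,0,5,0,0,0,0,0,0,0,0], [0,0,0,0,0,5,0,0,0,0,0,0,0,0,0], [0,0,0,0,5,0,0,0,0,0,0,0,0,0,0], [0,0,0,5,5,5,5,5,5,5,0,0,0,0,0], [0,0,1,1,1,1,3,3,0,5,5,3,4,0,0], [0,1,2,2,0,6,5,4,3,5,0,4,5,4,0], [0,1,2,3,1,6,2,3,3,2,5,5,0,3,0], [0,0,2,2,1,6,4,1,5,4,0,2,5,4,0], [0,0,0,1,2,1,4,3,5,5,2,1,3,0,0], [0,0,0,0,0,5,0,5,0,0,0,0,0,0,0], [0,0,0,0,0,0,5,0,0,0,0,0,0,0,0], [0,0,0,0,0,0,0,0,0,0,0,0,0,0,0]]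
def B4 : List (List ℕ) := [[], [0,0,0,0,0,0,0,0,0,0,0,0,0,0,0], [0,0,0,0,0,0,0,5,0,0,0,0,0,0,0], [0,0,0,0,0,0,5,0,0,0,0,0,0,0,0], [0,0,0,0,0,5,0,0,0,0,0,0,0,0,0], [0,0,0,0,5,0,0,0,0,0,0,0,0,0,0], [0,0,0,5,5,5,5,5,5,5,0,0,0,0,0], [0,0,1,1,2,1,4,3,0,5,5,3,4,0,0], [0,1,2,2,2,0,7,4,3,5,0,4,5,4,0], [0,1,2,3,3,1,5,3,3,2,5,5,0,3,0], [0,0,2,2,2,1,6,1,5,4,0,2,5,4,0], [0,0,0,1,2,2,5,3,5,5,2,1,3,0,0], [0,0,0,0,0,5,0,5,0,0,0,0,0,0,0], [0,0,0,0,0,0,5,0,0,0,0,0,0,0,0], [0,0,0,0,0,0,0,0,0,0,0,0,0,0,0]]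
def B5 : List (List ℕ) := [[], [0,0,0,0,0,0,0,0,0,0,0,0,0,0,0], [0,0,0,0,0,0,0,5,0,0,0,0,0,0,0], [0,0,0,0,0,0,5,0,0,0,0,0,0,0,0], [0,0,0,0,0,5,0,0,0,0,0,0,0,0,0], [0,0,0,0,5,0,0,0,0,0,0,0,0,0,0], [0,0,0,5,5,5,5,5,5,5,0,0,0,0,0], [0,0,1,1,2,2,4,4,0,5,5,3,4,0,0], [0,1,2,2,2,1,1,5,3,5,0,4,5,4,0], [0,1,2,3,3,2,6,5,3,2,5,5,0,3,0], [0,0,2,2,2,2,0,2,5,4,0,2,5,4,0], [0,0,0,1,2,2,6,4,5,5,2,1,3,0,0], [0,0,0,0,0,5,0,5,0,0,0,0,0,0,0], [0,0,0,0,0,0,5,0,0,0,0,0,0,0,0], [0,0,0,0,0,0,0,0,0,0,0,0,0,0,0]]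
def B6 : List (List ℕ) := [[], [0,0,0,0,0,0,0,0,0,0,0,0,0,0,0], [0,0,0,0,0,0,0,5,0,0,0,0,0,0,0], [0,0,0,0,0,0,5,0,0,0,0,0,0,0,0], [0,0,0,0,0,5,0,0,0,0,0,0,0,0,0], [0,0,0,0,5,0,0,0,0,0,0,0,0,0,0], [0,0,0,5,5,5,5,5,5,5,0,0,0,0,0], [0,0,1,1,2,2,4,4,0,5,5,3,4,0,0], [0,1,2,2,2,2,1,6,3,5,0,4,5,4,0], [0,1,2,3,3,3,0,6,3,2,5,5,0,3,0], [0,0,2,2,2,3,1,4,5,4,0,2,5,4,0], [0,0,0,1,2,3,0,5,5,5,2,1,3,0,0], [0,0,0,0,0,5,1,6,0,0,0,0,0,0,0], [0,0,0,0,0,0,5,0,0,0,0,0,0,0,0], [0,0,0,0,0,0,0,0,0,0,0,0,0,0,0]]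
def B7 : List (List ℕ) := [[], [0,0,0,0,0,0,0,0,0,0,0,0,0,0,0], [0,0,0,0,0,0,0,5,0,0,0,0,0,0,0], [0,0,0,0,0,0,5,0,0,0,0,0,0,0,0], [0,0,0,0,0,5,0,0,0,0,0,0,0,0,0], [0,0,0,0,5,0,0,0,0,0,0,0,0,0,0], [0,0,0,5,5,5,5,5,5,5,0,0,0,0,0], [0,0,1,1,2,2,5,4,1,5,5,3,4,0,0], [0,1,2,2,2,2,3,0,5,5,0,4,5,4,0], [0,1,2,3,3,3,1,1,5,2,5,5,0,3,0], [0,0,2,2,2,3,1,5,6,4,0,2,5,4,0], [0,0,0,1,2,3,1,5,6,5,2,1,3,0,0], [0,0,0,0,0,5,2,0,1,0,0,0,0,0,0], [0,0,0,0,0,0,5,1,1,0,0,0,0,0,0], [0,0,0,0,0,0,0,0,0,0,0,0,0,0,0]]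
def B8 : List (List ℕ) := [[], [0,0,0,0,0,0,0,0,0,0,0,0,0,0,0], [0,0,0,0,0,0,0,5,0,0,0,0,0,0,0], [0,0,0,0,0,0,5,0,0,0,0,0,0,0,0], [0,0,0,0,0,5,0,0,0,0,0,0,0,0,0], [0,0,0,0,5,0,0,0,0,0,0,0,0,0,0], [0,0,0,5,5,5,5,5,5,5,0,0,0,0,0], [0,0,1,1,2,2,5,4,1,5,5,3,4,0,0], [0,1,2,2,2,2,3,0,5,5,0,4,5,4,0], [0,1,2,3,3,3,1,2,5,3,5,5,0,3,0], [0,0,2,2,2,3,1,7,0,6,0,2,5,4,0], [0,0,0,1,2,3,1,6,1,7,2,1,3,0,0], [0,0,0,0,0,5,2,0,2,1,0,0,0,0,0], [0,0,0,0,0,0,5,1,1,0,0,0,0,0,0], [0,0,0,0,0,0,0,0,0,0,0,0,0,0,0]]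
def B9 : List (List ℕ) := [[], [0,0,0,0,0,0,0,0,0,0,0,0,0,0,0], [0,0,0,0,0,0,0,5,0,0,0,0,0,0,0], [0,0,0,0,0,0,5,0,0,0,0,0,0,0,0], [0,0,0,0,0,5,0,0,0,0,0,0,0,0,0], [0,0,0,0,5,0,0,0,0,0,0,0,0,0,0], [0,0,0,5,5,5,5,5,5,5,0,0,0,0,0], [0,0,1,1,2,2,5,4,1,5,5,3,4,0,0], [0,1,2,2,2,2,3,0,5,5,0,4,5,4,0], [0,1,2,3,3,3,2,2,7,3,6,5,0,3,0], [0,0,2,2,2,3,3,1,4,0,2,2,5,4,0], [0,0,0,1,2,3,2,1,4,2,4,1,3,0,0], [0,0,0,0,0,5,2,1,3,2,1,0,0,0,0], [0,0,0,0,0,0,5,1,1,0,0,0,0,0,0], [0,0,0,0,0,0,0,0,0,0,0,0,0,0,0]]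
def B10 : List (List ℕ) := [[], [0,0,0,0,0,0,0,0,0,0,0,0,0,0,0], [0,0,0,0,0,0,0,5,0,0,0,0,0,0,0], [0,0,0,0,0,0,5,0,0,0,0,0,0,0,0], [0,0,0,0,0,5,0,0,0,0,0,0,0,0,0], [0,0,0,0,5,0,0,0,0,0,0,0,0,0,0], [0,0,0,5,5,5,5,5,5,5,0,0,0,0,0], [0,0,1,1,2,2,5,4,1,5,5,3,4,0,0], [0,1,2,2,2,2,3,1,5,7,0,5,5,4,0], [0,1,2,3,3,3,2,3,1,5,0,6,0,3,0], [0,0,2,2,2,3,3,1,5,1,3,3,5,4,0], [0,0,0,1,2,3,2,1,4,2,4,1,3,0,0], [0,0,0,0,0,5,2,1,3,2,1,0,0,0,0], [0,0,0,0,0,0,5,1,1,0,0,0,0,0,0], [0,0,0,0,0,0,0,0,0,0,0,0,0,0,0]]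
def B11 : List (List ℕ) := [[], [0,0,0,0,0,0,0,0,0,0,0,0,0,0,0], [0,0,0,0,0,0,0,5,0,0,0,0,0,0,0], [0,0,0,0,0,0,5,0,0,0,0,0,0,0,0], [0,0,0,0,0,5,0,0,0,0,0,0,0,0,0], [0,0,0,0,5,0,0,0,0,0,0,0,0,0,0], [0,0,0,5,5,5,5,5,5,5,0,0,0,0,0], [0,0,1,1,2,2,5,4,2,5,6,3,4,0,0], [0,1,2,2,2,2,3,1,6,1,2,5,6,4,0], [0,1,2,3,3,3,2,3,1,6,2,0,1,3,0], [0,0,2,2,2,3,3,1,5,1,3,4,6,4,0], [0,0,0,1,2,3,2,1,4,2,4,1,3,0,0], [0,0,0,0,0,5,2,1,3,2,1,0,0,0,0], [0,0,0,0,0,0,5,1,1,0,0,0,0,0,0], [0,0,0,0,0,0,0,0,0,0,0,0,0,0,0]]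
def B12 : List (List ℕ) := [[], [0,0,0,0,0,0,0,0,0,0,0,0,0,0,0], [0,0,0,0,0,0,0,5,0,0,0,0,0,0,0], [0,0,0,0,0,0,5,0,0,0,0,0,0,0,0], [0,0,0,0,0,5,0,0,0,0,0,0,0,0,0], [0,0,0,0,5,0,0,0,0,0,0,0,0,0,0], [0,0,0,5,5,5,5,5,5,6,0,1,0,0,0], [0,0,1,1,2,2,5,5,2,7,0,5,4,1,0], [0,1,2,2,2,2,3,2,1,2,4,7,0,5,0], [0,1,2,3,3,3,2,3,3,1,3,1,2,5,0], [0,0,2,2,2,3,3,1,5,2,4,5,0,5,0], [0,0,0,1,2,3,2,1,4,2,4,1,4,1,0], [0,0,0,0,0,5,2,1,3,2,1,0,0,0,0], [0,0,0,0,0,0,5,1,1,0,0,0,0,0,0], [0,0,0,0,0,0,0,0,0,0,0,0,0,0,0]]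
def B13 : List (List ℕ) := [[], [0,0,0,0,0,0,0,0,0,0,0,0,0,0,0], [0,0,0,0,0,0,0,5,0,0,0,0,0,0,0], [0,0,0,0,0,0,5,0,0,0,0,0,0,0,0], [0,0,0,0,0,5,0,0,0,0,0,0,0,0,0], [0,0,0,0,5,0,0,0,1,0,1,0,0,0,0], [0,0,0,5,5,5,5,5,7,0,2,1,0,0,0], [0,0,1,1,2,2,5,5,3,2,3,5,5,1,0], [0,1,2,2,2,2,3,2,1,3,6,1,1,5,0], [0,1,2,3,3,3,2,3,3,1,3,2,3,5,0], [0,0,2,2,2,3,3,1,5,2,4,5,0,5,0], [0,0,0,1,2,3,2,1,4,2,4,1,4,1,0], [0,0,0,0,0,5,2,1,3,2,1,0,0,0,0], [0,0,0,0,0,0,5,1,1,0,0,0,0,0,0], [0,0,0,0,0,0,0,0,0,0,0,0,0,0,0]]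
def B14 : List (List ℕ) := [[], [0,0,0,0,0,0,0,0,0,0,0,0,0,0,0], [0,0,0,0,0,0,0,5,0,0,0,0,0,0,0], [0,0,0,0,0,0,5,0,0,0,0,0,0,0,0], [0,0,0,0,0,5,0,0,0,0,0,0,0,0,0], [0,0,0,0,5,0,0,1,1,1,1,0,0,0,0], [0,0,0,5,5,5,5,6,1,1,2,1,0,0,0], [0,0,1,1,2,2,5,5,4,4,3,6,5,1,0], [0,1,2,2,2,2,3,2,1,4,0,2,1,5,0], [0,1,2,3,3,3,2,3,3,1,4,3,3,5,0], [0,0,2,2,2,3,3,1,5,2,4,5,0,5,0], [0,0,0,1,2,3,2,1,4,2,4,1,4,1,0], [0,0,0,0,0,5,2,1,3,2,1,0,0,0,0], [0,0,0,0,0,0,5,1,1,0,0,0,0,0,0], [0,0,0,0,0,0,0,0,0,0,0,0,0,0,0]]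
def B15 : List (List ℕ) := [[], [0,0,0,0,0,0,0,0,0,0,0,0,0,0,0], [0,0,0,0,0,0,0,5,0,0,0,0,0,0,0], [0,0,0,0,0,0,5,0,0,0,0,0,0,0,0], [0,0,0,0,0,5,0,0,0,0,0,0,0,0,0], [0,0,0,0,5,0,1,1,2,1,1,0,0,0,0], [0,0,0,5,5,5,6,0,2,1,3,1,1,0,0], [0,0,1,1,2,2,5,6,5,4,4,0,6,1,0], [0,1,2,2,2,2,3,2,1,4,0,3,2,5,0], [0,1,2,3,3,3,2,3,3,1,4,3,3,5,0], [0,0,2,2,2,3,3,1,5,2,4,5,0,5,0], [0,0,0,1,2,3,2,1,4,2,4,1,4,1,0], [0,0,0,0,0,5,2,1,3,2,1,0,0,0,0], [0,0,0,0,0,0,5,1,1,0,0,0,0,0,0], [0,0,0,0,0,0,0,0,0,0,0,0,0,0,0]]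
def B16 : List (List ℕ) := [[], [0,0,0,0,0,0,0,0,0,0,0,0,0,0,0], [0,0,0,0,0,0,0,5,0,0,0,0,0,0,0], [0,0,0,0,0,0,5,0,0,0,0,0,0,0,0], [0,0,0,0,0,5,0,0,0,0,0,0,0,0,0], [0,0,0,0,5,1,1,2,2,1,1,0,0,0,0], [0,0,0,5,5,6,1,1,3,1,3,2,1,1,0], [0,0,1,1,2,2,7,1,6,4,4,1,0,2,0], [0,1,2,2,2,2,3,3,2,4,0,3,3,6,0], [0,1,2,3,3,3,2,3,3,1,4,3,3,5,0], [0,0,2,2,2,3,3,1,5,2,4,5,0,5,0], [0,0,0,1,2,3,2,1,4,2,4,1,4,1,0], [0,0,0,0,0,5,2,1,3,2,1,0,0,0,0], [0,0,0,0,0,0,5,1,1,0,0,0,0,0,0], [0,0,0,0,0,0,0,0,0,0,0,0,0,0,0]]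
def B17 : List (List ℕ) := [[], [0,0,0,0,0,0,0,0,0,0,0,0,0,0,0], [0,0,0,0,0,0,0,5,0,0,0,0,0,0,0], [0,0,0,0,0,0,5,0,0,0,0,0,0,0,0], [0,0,0,0,0,5,0,0,0,0,0,0,0,0,0], [0,0,0,0,6,1,2,2,2,1,1,0,0,0,0], [0,0,0,5,6,1,2,3,3,2,3,2,1,1,0], [0,0,1,1,2,4,2,3,0,5,4,1,1,2,1], [0,1,2,2,2,2,4,4,3,5,0,3,4,0,1], [0,1,2,3,3,3,2,3,3,1,4,3,3,6,1], [0,0,2,2,2,3,3,1,5,2,4,5,0,5,0], [0,0,0,1,2,3,2,1,4,2,4,1,4,1,0], [0,0,0,0,0,5,2,1,3,2,1,0,0,0,0], [0,0,0,0,0,0,5,1,1,0,0,0,0,0,0], [0,0,0,0,0,0,0,0,0,0,0,0,0,0,0]]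
lemma stepA0 : F NB (tb A0) = tb A1 :=
  step_of A0 A1 (by decide) (by decide) (by decide) (by decide)
lemma stepA1 : F NB (tb A1) = tb A2 :=
  step_of A1 A2 (by decide) (by decide) (by decide) (by decide)
lemma stepA2 : F NB (tb A2) = tb A3 :=
  step_of A2 A3 (by decide) (by decide) (by decide) (by decide)
lemma stepA3 : F NB (tb A3) = tb A4 :=
  step_of A3 A4 (by decide) (by decide) (by decide) (by decide)
lemma stepA4 : F NB (tb A4) = tb A5 :=
  step_of A4 A5 (by decide) (by decide) (by decide) (by decide)
lemma stepA5 : F NB (tb A5) = tb A6 :=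
  step_of A5 A6 (by decide) (by decide) (by decide) (by decide)
lemma stepA6 : F NB (tb A6) = tb A7 :=
  step_of A6 A7 (by decide) (by decide) (by decide) (by decide)
lemma stepA7 : F NB (tb A7) = tb A8 :=
  step_of A7 A8 (by decide) (by decide) (by decide) (by decide)
lemma stepA8 : F NB (tb A8) = tb A9 :=
  step_of A8 A9 (by decide) (by decide) (by decide) (by decide)
lemma stepA9 : F NB (tb A9) = tb A10 :=
  step_of A9 A10 (by decide) (by decide) (by decide) (by decide)
lemma stepA10 : F NB (tb A10) = tb A11 :=
  step_of A10 A11 (by decide) (by decide) (by decide) (by decide)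
lemma stepA11 : F NB (tb A11) = tb A12 :=
  step_of A11 A12 (by decide) (by decide) (by decide) (by decide)
lemma stepA12 : F NB (tb A12) = tb A13 :=
  step_of A12 A13 (by decide) (by decide) (by decide) (by decide)
lemma stepA13 : F NB (tb A13) = tb A14 :=
  step_of A13 A14 (by decide) (by decide) (by decide) (by decide)
lemma stepA14 : F NB (tb A14) = tb A15 :=
  step_of A14 A15 (by decide) (by decide) (by decide) (by decide)
lemma stepA15 : F NB (tb A15) = tb A16 :=
  step_of A15 A16 (by decide) (by decide) (by decide) (by decide)
lemma stepA16 : F NB (tb A16) = tb A17 :=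
  step_of A16 A17 (by decide) (by decide) (by decide) (by decide)
lemma stepB0 : F NB (tb B0) = tb B1 :=
  step_of B0 B1 (by decide) (by decide) (by decide) (by decide)
lemma stepB1 : F NB (tb B1) = tb B2 :=
  step_of B1 B2 (by decide) (by decide) (by decide) (by decide)
lemma stepB2 : F NB (tb B2) = tb B3 :=
  step_of B2 B3 (by decide) (by decide) (by decide) (by decide)
lemma stepB3 : F NB (tb B3) = tb B4 :=
  step_of B3 B4 (by decide) (by decide) (by decide) (by decide)
lemma stepB4 : F NB (tb B4) = tb B5 :=
  step_of B4 B5 (by decide) (by decide) (by decide) (by decide)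
lemma stepB5 : F NB (tb B5) = tb B6 :=
  step_of B5 B6 (by decide) (by decide) (by decide) (by decide)
lemma stepB6 : F NB (tb B6) = tb B7 :=
  step_of B6 B7 (by decide) (by decide) (by decide) (by decide)
lemma stepB7 : F NB (tb B7) = tb B8 :=
  step_of B7 B8 (by decide) (by decide) (by decide) (by decide)
lemma stepB8 : F NB (tb B8) = tb B9 :=
  step_of B8 B9 (by decide) (by decide) (by decide) (by decide)
lemma stepB9 : F NB (tb B9) = tb B10 :=
  step_of B9 B10 (by decide) (by decide) (by decide) (by decide)
lemma stepB10 : F NB (tb B10) = tb B11 :=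
  step_of B10 B11 (by decide) (by decide) (by decide) (by decide)
lemma stepB11 : F NB (tb B11) = tb B12 :=
  step_of B11 B12 (by decide) (by decide) (by decide) (by decide)
lemma stepB12 : F NB (tb B12) = tb B13 :=
  step_of B12 B13 (by decide) (by decide) (by decide) (by decide)
lemma stepB13 : F NB (tb B13) = tb B14 :=
  step_of B13 B14 (by decide) (by decide) (by decide) (by decide)
lemma stepB14 : F NB (tb B14) = tb B15 :=
  step_of B14 B15 (by decide) (by decide) (by decide) (by decide)
lemma stepB15 : F NB (tb B15) = tb B16 :=
  step_of B15 B16 (by decide) (by decide) (by decide) (by decide)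
lemma stepB16 : F NB (tb B16) = tb B17 :=
  step_of B16 B17 (by decide) (by decide) (by decide) (by decide)

lemma initA_s11 : tb GT + one ((4:ℤ),(11:ℤ)) = tb A0 :=
  init_of GT A0 _ (by decide) (by decide) (by decide) (by decide)

lemma initB_s11 : tb GT + one ((0:ℤ),(7:ℤ)) = tb B0 :=
  init_of GT B0 _ (by decide) (by decide) (by decide) (by decide)

theorem nbhd215_timed_crossover :
    ∃ g n e s w, IsTimedCrossoverGate
      ({(0,1),(1,0),(-1,0),(1,1),(1,-1),(-1,-1)} : Finset Cell) 12 12 17 g n e s w := by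
  show ∃ g n e s w, IsTimedCrossoverGate NB 12 12 17 g n e s w
  refine ⟨tb GT, ((4:ℤ),(11:ℤ)), ((11:ℤ),(7:ℤ)), ((5:ℤ),(0:ℤ)), ((0:ℤ),(7:ℤ)), ?_⟩
  have hTG : TOK GT := by decide
  have EA0 : (F NB)^[0] (tb GT + one ((4:ℤ),(11:ℤ))) = tb A0 := by
    rw [Function.iterate_zero_apply]; exact initA_s11
  have EA1 : (F NB)^[1] (tb GT + one ((4:ℤ),(11:ℤ))) = tb A1 := by
    rw [show (1:ℕ) = 0 + 1 from rfl, Function.iterate_succ_apply', EA0, stepA0]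
  have EA2 : (F NB)^[2] (tb GT + one ((4:ℤ),(11:ℤ))) = tb A2 := by
    rw [show (2:ℕ) = 1 + 1 from rfl, Function.iterate_succ_apply', EA1, stepA1]
  have EA3 : (F NB)^[3] (tb GT + one ((4:ℤ),(11:ℤ))) = tb A3 := by
    rw [show (3:ℕ) = 2 + 1 from rfl, Function.iterate_succ_apply', EA2, stepA2]
  have EA4 : (F NB)^[4] (tb GT + one ((4:ℤ),(11:ℤ))) = tb A4 := by
    rw [show (4:ℕ) = 3 + 1 from rfl, Function.iterate_succ_apply', EA3, stepA3]
  have EA5 : (F NB)^[5] (tb GT + one ((4:ℤ),(11:ℤ))) = tb A5 := by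
    rw [show (5:ℕ) = 4 + 1 from rfl, Function.iterate_succ_apply', EA4, stepA4]
  have EA6 : (F NB)^[6] (tb GT + one ((4:ℤ),(11:ℤ))) = tb A6 := by
    rw [show (6:ℕ) = 5 + 1 from rfl, Function.iterate_succ_apply', EA5, stepA5]
  have EA7 : (F NB)^[7] (tb GT + one ((4:ℤ),(11:ℤ))) = tb A7 := by
    rw [show (7:ℕ) = 6 + 1 from rfl, Function.iterate_succ_apply', EA6, stepA6]
  have EA8 : (F NB)^[8] (tb GT + one ((4:ℤ),(11:ℤ))) = tb A8 := by
    rw [show (8:ℕ) = 7 + 1 from rfl, Function.iterate_succ_apply', EA7, stepA7]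
  have EA9 : (F NB)^[9] (tb GT + one ((4:ℤ),(11:ℤ))) = tb A9 := by
    rw [show (9:ℕ) = 8 + 1 from rfl, Function.iterate_succ_apply', EA8, stepA8]
  have EA10 : (F NB)^[10] (tb GT + one ((4:ℤ),(11:ℤ))) = tb A10 := by
    rw [show (10:ℕ) = 9 + 1 from rfl, Function.iterate_succ_apply', EA9, stepA9]
  have EA11 : (F NB)^[11] (tb GT + one ((4:ℤ),(11:ℤ))) = tb A11 := by
    rw [show (11:ℕ) = 10 + 1 from rfl, Function.iterate_succ_apply', EA10, stepA10]
  have EA12 : (F NB)^[12] (tb GT + one ((4:ℤ),(11:ℤ))) = tb A12 := by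
    rw [show (12:ℕ) = 11 + 1 from rfl, Function.iterate_succ_apply', EA11, stepA11]
  have EA13 : (F NB)^[13] (tb GT + one ((4:ℤ),(11:ℤ))) = tb A13 := by
    rw [show (13:ℕ) = 12 + 1 from rfl, Function.iterate_succ_apply', EA12, stepA12]
  have EA14 : (F NB)^[14] (tb GT + one ((4:ℤ),(11:ℤ))) = tb A14 := by
    rw [show (14:ℕ) = 13 + 1 from rfl, Function.iterate_succ_apply', EA13, stepA13]
  have EA15 : (F NB)^[15] (tb GT + one ((4:ℤ),(11:ℤ))) = tb A15 := by
    rw [show (15:ℕ) = 14 + 1 from rfl, Function.iterate_succ_apply', EA14, stepA14]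
  have EA16 : (F NB)^[16] (tb GT + one ((4:ℤ),(11:ℤ))) = tb A16 := by
    rw [show (16:ℕ) = 15 + 1 from rfl, Function.iterate_succ_apply', EA15, stepA15]
  have EA17 : (F NB)^[17] (tb GT + one ((4:ℤ),(11:ℤ))) = tb A17 := by
    rw [show (17:ℕ) = 16 + 1 from rfl, Function.iterate_succ_apply', EA16, stepA16]
  have EB0 : (F NB)^[0] (tb GT + one ((0:ℤ),(7:ℤ))) = tb B0 := by
    rw [Function.iterate_zero_apply]; exact initB_s11
  have EB1 : (F NB)^[1] (tb GT + one ((0:ℤ),(7:ℤ))) = tb B1 := by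
    rw [show (1:ℕ) = 0 + 1 from rfl, Function.iterate_succ_apply', EB0, stepB0]
  have EB2 : (F NB)^[2] (tb GT + one ((0:ℤ),(7:ℤ))) = tb B2 := by
    rw [show (2:ℕ) = 1 + 1 from rfl, Function.iterate_succ_apply', EB1, stepB1]
  have EB3 : (F NB)^[3] (tb GT + one ((0:ℤ),(7:ℤ))) = tb B3 := by
    rw [show (3:ℕ) = 2 + 1 from rfl, Function.iterate_succ_apply', EB2, stepB2]
  have EB4 : (F NB)^[4] (tb GT + one ((0:ℤ),(7:ℤ))) = tb B4 := by
    rw [show (4:ℕ) = 3 + 1 from rfl, Function.iterate_succ_apply', EB3, stepB3]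
  have EB5 : (F NB)^[5] (tb GT + one ((0:ℤ),(7:ℤ))) = tb B5 := by
    rw [show (5:ℕ) = 4 + 1 from rfl, Function.iterate_succ_apply', EB4, stepB4]
  have EB6 : (F NB)^[6] (tb GT + one ((0:ℤ),(7:ℤ))) = tb B6 := by
    rw [show (6:ℕ) = 5 + 1 from rfl, Function.iterate_succ_apply', EB5, stepB5]
  have EB7 : (F NB)^[7] (tb GT + one ((0:ℤ),(7:ℤ))) = tb B7 := by
    rw [show (7:ℕ) = 6 + 1 from rfl, Function.iterate_succ_apply', EB6, stepB6]
  have EB8 : (F NB)^[8] (tb GT + one ((0:ℤ),(7:ℤ))) = tb B8 := by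
    rw [show (8:ℕ) = 7 + 1 from rfl, Function.iterate_succ_apply', EB7, stepB7]
  have EB9 : (F NB)^[9] (tb GT + one ((0:ℤ),(7:ℤ))) = tb B9 := by
    rw [show (9:ℕ) = 8 + 1 from rfl, Function.iterate_succ_apply', EB8, stepB8]
  have EB10 : (F NB)^[10] (tb GT + one ((0:ℤ),(7:ℤ))) = tb B10 := by
    rw [show (10:ℕ) = 9 + 1 from rfl, Function.iterate_succ_apply', EB9, stepB9]
  have EB11 : (F NB)^[11] (tb GT + one ((0:ℤ),(7:ℤ))) = tb B11 := by
    rw [show (11:ℕ) = 10 + 1 from rfl, Function.iterate_succ_apply', EB10, stepB10]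
  have EB12 : (F NB)^[12] (tb GT + one ((0:ℤ),(7:ℤ))) = tb B12 := by
    rw [show (12:ℕ) = 11 + 1 from rfl, Function.iterate_succ_apply', EB11, stepB11]
  have EB13 : (F NB)^[13] (tb GT + one ((0:ℤ),(7:ℤ))) = tb B13 := by
    rw [show (13:ℕ) = 12 + 1 from rfl, Function.iterate_succ_apply', EB12, stepB12]
  have EB14 : (F NB)^[14] (tb GT + one ((0:ℤ),(7:ℤ))) = tb B14 := by
    rw [show (14:ℕ) = 13 + 1 from rfl, Function.iterate_succ_apply', EB13, stepB13]
  have EB15 : (F NB)^[15] (tb GT + one ((0:ℤ),(7:ℤ))) = tb B15 := by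
    rw [show (15:ℕ) = 14 + 1 from rfl, Function.iterate_succ_apply', EB14, stepB14]
  have EB16 : (F NB)^[16] (tb GT + one ((0:ℤ),(7:ℤ))) = tb B16 := by
    rw [show (16:ℕ) = 15 + 1 from rfl, Function.iterate_succ_apply', EB15, stepB15]
  have EB17 : (F NB)^[17] (tb GT + one ((0:ℤ),(7:ℤ))) = tb B17 := by
    rw [show (17:ℕ) = 16 + 1 from rfl, Function.iterate_succ_apply', EB16, stepB16]
  unfold IsTimedCrossoverGate
  refine ⟨?_, ?_, ?_, ?_, ?_, ?_, ?_, ?_, ?_, ?_, 3, 2, 1, 0, ?_, ?_, ?_, ?_,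
    by decide, by decide, by decide, ?_, ?_, ?_, ?_⟩
  · -- Stable
    intro p
    rw [theta_NB]
    by_cases hb : p ∈ boxF
    · exact (by decide : ∀ q ∈ boxF, tb GT q < 6) p hb
    · have hout : p.1 ≤ -2 ∨ 13 ≤ p.1 ∨ p.2 ≤ -2 ∨ 13 ≤ p.2 := by
        simp only [boxF, Finset.mem_product, Finset.mem_Icc] at hb; omega
      rw [tb_out_of GT hTG p hout]; omega
  · -- support
    intro p hp
    have hco : ¬(0 ≤ p.1 ∧ p.1 < 12 ∧ 0 ≤ p.2 ∧ p.2 < 12) := by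
      intro hc
      exact hp (by
        show 0 ≤ p.1 ∧ p.1 < ((12:ℕ):ℤ) ∧ 0 ≤ p.2 ∧ p.2 < ((12:ℕ):ℤ)
        push_cast
        exact hc)
    by_cases hb : p ∈ boxF
    · refine (by decide : ∀ q ∈ boxF, (q.1 < 0 ∨ 12 ≤ q.1 ∨ q.2 < 0 ∨ 12 ≤ q.2) → tb GT q = 0)
        p hb (by omega)
    · have hout : p.1 ≤ -2 ∨ 13 ≤ p.1 ∨ p.2 ≤ -2 ∨ 13 ≤ p.2 := by
        simp only [boxF, Finset.mem_product, Finset.mem_Icc] at hb; omega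
      exact tb_out_of GT hTG p hout
  · exact ⟨by norm_num, by norm_num, by norm_num, by norm_num⟩
  · exact ⟨by norm_num, by norm_num, by norm_num, by norm_num⟩
  · exact ⟨by norm_num, by norm_num, by norm_num, by norm_num⟩
  · exact ⟨by norm_num, by norm_num, by norm_num, by norm_num⟩
  · -- n not corner
    simp only [Corners, Set.mem_insert_iff, Set.mem_singleton_iff, Prod.mk.injEq]
    norm_num
  · simp only [Corners, Set.mem_insert_iff, Set.mem_singleton_iff, Prod.mk.injEq]
    norm_num
  · simp only [Corners, Set.mem_insert_iff, Set.mem_singleton_iff, Prod.mk.injEq]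
    norm_num
  · simp only [Corners, Set.mem_insert_iff, Set.mem_singleton_iff, Prod.mk.injEq]
    norm_num
  · rw [side3]; exact ⟨by norm_num, by norm_num, by norm_num⟩
  · rw [side2]; exact ⟨by norm_num, by norm_num, by norm_num⟩
  · rw [side1]; exact ⟨by norm_num, by norm_num, by norm_num⟩
  · rw [side0]; exact ⟨by norm_num, by norm_num, by norm_num⟩
  · -- θ ≤ F^[17] (g + one n) s
    rw [EA17, theta_NB]
    decide
  · -- quiet WE for run 1
    intro p hp t ht
    interval_cases t
    · rw [EA0]; exact quietWE A0 (by decide) p hp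
    · rw [EA1]; exact quietWE A1 (by decide) p hp
    · rw [EA2]; exact quietWE A2 (by decide) p hp
    · rw [EA3]; exact quietWE A3 (by decide) p hp
    · rw [EA4]; exact quietWE A4 (by decide) p hp
    · rw [EA5]; exact quietWE A5 (by decide) p hp
    · rw [EA6]; exact quietWE A6 (by decide) p hp
    · rw [EA7]; exact quietWE A7 (by decide) p hp
    · rw [EA8]; exact quietWE A8 (by decide) p hp
    · rw [EA9]; exact quietWE A9 (by decide) p hp
    · rw [EA10]; exact quietWE A10 (by decide) p hp
    · rw [EA11]; exact quietWE A11 (by decide) p hp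
    · rw [EA12]; exact quietWE A12 (by decide) p hp
    · rw [EA13]; exact quietWE A13 (by decide) p hp
    · rw [EA14]; exact quietWE A14 (by decide) p hp
    · rw [EA15]; exact quietWE A15 (by decide) p hp
    · rw [EA16]; exact quietWE A16 (by decide) p hp
    · rw [EA17]; exact quietWE A17 (by decide) p hp
  · -- θ ≤ F^[17] (g + one w) e
    rw [EB17, theta_NB]
    decide
  · -- quiet NS for run 2
    intro p hp t ht
    interval_cases t
    · rw [EB0]; exact quietNS B0 (by decide) p hp
    · rw [EB1]; exact quietNS B1 (by decide) p hp
    · rw [EB2]; exact quietNS B2 (by decide) p hp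
    · rw [EB3]; exact quietNS B3 (by decide) p hp
    · rw [EB4]; exact quietNS B4 (by decide) p hp
    · rw [EB5]; exact quietNS B5 (by decide) p hp
    · rw [EB6]; exact quietNS B6 (by decide) p hp
    · rw [EB7]; exact quietNS B7 (by decide) p hp
    · rw [EB8]; exact quietNS B8 (by decide) p hp
    · rw [EB9]; exact quietNS B9 (by decide) p hp
    · rw [EB10]; exact quietNS B10 (by decide) p hp
    · rw [EB11]; exact quietNS B11 (by decide) p hp
    · rw [EB12]; exact quietNS B12 (by decide) p hp
    · rw [EB13]; exact quietNS B13 (by decide) p hp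
    · rw [EB14]; exact quietNS B14 (by decide) p hp
    · rw [EB15]; exact quietNS B15 (by decide) p hp
    · rw [EB16]; exact quietNS B16 (by decide) p hp
    · rw [EB17]; exact quietNS B17 (by decide) p hp

end Sandpile
end

section
/- Let N be a sandpile model on ℤ² such that every element (x,y) ∈ N has odd second coordinate y. Let c be a stable configuration and p = (p₁,p₂) ∈ ℤ². Then for every t ∈ ℕ and every cell q = (q₁,q₂) ∈ ℤ², if F^t(c + 1_p)(q) ≥ θ then t ≡ q₂ − p₂ (mod 2). In particular, the parity of the time step at which a cell can reach the threshold is determined by the parity of its second coordinate. -/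
namespace Sandpile

/-- Parity obstruction: if every neighbor has odd second coordinate, then the
time at which a cell can reach the threshold has parity determined by the
second coordinates. -/
theorem parity_of_firing_times
    (𝒩 : Finset Cell) (h0 : ((0, 0) : Cell) ∉ 𝒩)
    (hodd : ∀ v ∈ 𝒩, Odd v.2)
    (c : Config) (hc : Stable 𝒩 c) (p : Cell) :
    ∀ t : ℕ, ∀ q : Cell, θ 𝒩 ≤ (F 𝒩)^[t] (c + one p) q →
      (t : ℤ) ≡ q.2 - p.2 [ZMOD 2] := by
  have hθ : 0 < θ 𝒩 := by
    by_contra h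
    have := hc (0, 0)
    omega
  suffices H : ∀ t : ℕ, ∀ q : Cell,
      (F 𝒩)^[t] (c + one p) q < 2 * θ 𝒩 ∧
      (θ 𝒩 ≤ (F 𝒩)^[t] (c + one p) q → (t : ℤ) ≡ q.2 - p.2 [ZMOD 2]) by
    exact fun t q hq => (H t q).2 hq
  intro t
  induction t with
  | zero =>
    intro q
    have h1 : c q < θ 𝒩 := hc q
    have h2 : one p q ≤ 1 := by unfold one; split <;> omega
    simp only [Function.iterate_zero, id_eq, Pi.add_apply]
    refine ⟨by omega, fun hge => ?_⟩
    have hqp : q = p := by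
      by_contra hne
      unfold one at hge
      rw [if_neg hne] at hge
      omega
    subst hqp
    simp [Int.ModEq]
  | succ t ih =>
    intro q
    rw [Function.iterate_succ_apply']
    set d := (F 𝒩)^[t] (c + one p) with hd
    have hFq : F 𝒩 d q = d q - θ 𝒩 * (if θ 𝒩 ≤ d q then 1 else 0)
        + ∑ p' ∈ 𝒩, (if θ 𝒩 ≤ d (q - p') then 1 else 0) := rfl
    have hk_le : (∑ p' ∈ 𝒩, (if θ 𝒩 ≤ d (q - p') then 1 else 0)) ≤ θ 𝒩 := by
      calc (∑ p' ∈ 𝒩, (if θ 𝒩 ≤ d (q - p') then 1 else 0))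
          ≤ ∑ _p' ∈ 𝒩, 1 := Finset.sum_le_sum (fun i _ => by split <;> omega)
        _ = θ 𝒩 := by simp [θ]
    have hb := (ih q).1
    by_cases hfire : θ 𝒩 ≤ d q
    · have hpar : (t : ℤ) ≡ q.2 - p.2 [ZMOD 2] := (ih q).2 hfire
      have hk0 : (∑ p' ∈ 𝒩, (if θ 𝒩 ≤ d (q - p') then 1 else 0)) = 0 := by
        apply Finset.sum_eq_zero
        intro p' hp'
        rw [if_neg]
        intro hge
        have hpar' := (ih (q - p')).2 hge
        obtain ⟨m, hm⟩ := hodd p' hp'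
        have hsnd : (q - p').2 = q.2 - p'.2 := rfl
        rw [hsnd] at hpar'
        unfold Int.ModEq at hpar hpar'
        omega
      rw [hFq, hk0, if_pos hfire]
      exact ⟨by omega, fun h => absurd h (by omega)⟩
    · rw [hFq, if_neg hfire]
      have hblt : d q < θ 𝒩 := lt_of_not_ge hfire
      refine ⟨by omega, fun hge => ?_⟩
      have hk_pos : (∑ p' ∈ 𝒩, (if θ 𝒩 ≤ d (q - p') then 1 else 0)) ≠ 0 := by omega
      obtain ⟨p', hp', hne⟩ := Finset.exists_ne_zero_of_sum_ne_zero hk_pos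
      have hge' : θ 𝒩 ≤ d (q - p') := by
        by_contra h
        exact hne (if_neg h)
      have hpar' := (ih (q - p')).2 hge'
      obtain ⟨m, hm⟩ := hodd p' hp'
      have hsnd : (q - p').2 = q.2 - p'.2 := rfl
      rw [hsnd] at hpar'
      unfold Int.ModEq at hpar' ⊢
      push_cast
      omega

end Sandpile
end
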